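/- arXiv:2003.06130 — 4 statements merged into one kernel-verified Lean document; each statement's English description precedes it below -/
import Mathlib

section
/- Let Φ be a measurable functional calculus on (X, Σ) with values in closed operators on a Hilbert space H. Then: (d) for every measurable f : X → 𝕜 the operator Φ(f) is densely defined; (e) if f is bounded then ‖Φ(f)‖ ≤ ‖f‖_∞; (f) Φ is bp-continuous, i.e. if a sequence of measurable functions f_n converges to f pointwise with sup_n ‖f_n‖_∞ < ∞, then Φ(f_n)x → Φ(f)x in norm for every x ∈ H. -/
open scoped Topology

noncomputable section

/-- Composition `S ∘ T` of partially defined linear operators, with domain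
`{x ∈ dom T | T x ∈ dom S}`. -/
noncomputable def LinearPMap.compP {R E : Type*} [Ring R] [AddCommGroup E] [Module R E]
    (S T : E →ₗ.[R] E) : E →ₗ.[R] E where
  domain := (S.domain.comap T.toFun).map T.domain.subtype
  toFun := S.toFun.comp <| LinearMap.codRestrict S.domain
      (T.toFun.comp (Submodule.inclusion (Submodule.map_subtype_le _ _)))
      (fun x => by
        obtain ⟨y, hy, hyx⟩ := Submodule.mem_map.mp x.2
        have hxy : Submodule.inclusion
            (Submodule.map_subtype_le T.domain (S.domain.comap T.toFun)) x = y := by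
          apply Subtype.ext
          simpa using hyx.symm
        rw [LinearMap.comp_apply, hxy]
        exact hy)

/-- A measurable functional calculus on a measurable space `X`, with values in
closed partially defined operators on a Hilbert space `H` over `𝕜`. -/
structure MeasFC (X : Type*) [MeasurableSpace X] (𝕜 : Type*) [RCLike 𝕜]
    (H : Type*) [NormedAddCommGroup H] [InnerProductSpace 𝕜 H] [CompleteSpace H] where
  ap : (X → 𝕜) → (H →ₗ.[𝕜] H)
  isClosed : ∀ f : X → 𝕜, Measurable f → (ap f).IsClosed
  mfc1 : ap (fun _ => 1) = (LinearMap.id : H →ₗ[𝕜] H).toPMap ⊤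
  mfc2_add : ∀ f g : X → 𝕜, Measurable f → Measurable g → ap f + ap g ≤ ap (f + g)
  mfc2_smul : ∀ (c : 𝕜) (f : X → 𝕜), Measurable f → c • ap f ≤ ap (fun x => c * f x)
  mfc3_le : ∀ f g : X → 𝕜, Measurable f → Measurable g → (ap f).compP (ap g) ≤ ap (f * g)
  mfc3_dom : ∀ f g : X → 𝕜, Measurable f → Measurable g →
      ((ap f).compP (ap g)).domain = (ap g).domain ⊓ (ap (f * g)).domain
  mfc4_dom : ∀ f : X → 𝕜, Measurable f → (∃ C, ∀ x, ‖f x‖ ≤ C) → (ap f).domain = ⊤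
  mfc4_cont : ∀ f : X → 𝕜, Measurable f → (∃ C, ∀ x, ‖f x‖ ≤ C) →
      Continuous fun x : (ap f).domain => ap f x
  mfc4_star : ∀ f : X → 𝕜, Measurable f → (∃ C, ∀ x, ‖f x‖ ≤ C) →
      (ap f).adjoint = ap (fun x => starRingEnd 𝕜 (f x))
  mfc5 : ∀ (f : ℕ → X → 𝕜) (g : X → 𝕜), (∀ n, Measurable (f n)) → Measurable g →
      (∃ C, ∀ n x, ‖f n x‖ ≤ C) →
      (∀ x, Filter.Tendsto (fun n => f n x) Filter.atTop (𝓝 (g x))) →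
      ∀ (x y : H) (hn : ∀ n, x ∈ (ap (f n)).domain) (hg : x ∈ (ap g).domain),
        Filter.Tendsto (fun n => (inner 𝕜 (ap (f n) ⟨x, hn n⟩) y : 𝕜)) Filter.atTop
          (𝓝 (inner 𝕜 (ap g ⟨x, hg⟩) y))

/-- `B` is a `Φ`-null set: `Φ(𝟏_B) = 0`. -/
def MeasFC.IsNull {X : Type*} [MeasurableSpace X] {𝕜 : Type*} [RCLike 𝕜]
    {H : Type*} [NormedAddCommGroup H] [InnerProductSpace 𝕜 H] [CompleteSpace H]
    (Φ : MeasFC X 𝕜 H) (B : Set X) : Prop :=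
  Φ.ap (B.indicator fun _ => 1) = (0 : H →ₗ[𝕜] H).toPMap ⊤


variable {𝕜 : Type*} [RCLike 𝕜] {X : Type*} [MeasurableSpace X]
  {H : Type*} [NormedAddCommGroup H] [InnerProductSpace 𝕜 H] [CompleteSpace H]

section MFCProof

local notation "⟪" x ", " y "⟫" => @inner 𝕜 _ _ x y

private lemma memTop {p : Submodule 𝕜 H} (h : p = ⊤) (x : H) : x ∈ p :=
  h ▸ Submodule.mem_top

private lemma dense_of_top {p : Submodule 𝕜 H} (h : p = ⊤) : Dense (p : Set H) := by
  rw [h, Submodule.top_coe]; exact dense_univ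

private lemma compP_mem {S T : H →ₗ.[𝕜] H} (h : (S.compP T).domain = ⊤) (x : H)
    (hx : x ∈ T.domain) : T ⟨x, hx⟩ ∈ S.domain := by
  have hx2 : x ∈ (S.compP T).domain := h ▸ Submodule.mem_top
  obtain ⟨w, hw, hwx⟩ := Submodule.mem_map.mp hx2
  have hwe : w = ⟨x, hx⟩ := Subtype.ext hwx
  rw [← hwe]
  exact Submodule.mem_comap.mp hw

private lemma compP_apply {S T : H →ₗ.[𝕜] H} (x : H) (hx : x ∈ T.domain)
    (hTx : T ⟨x, hx⟩ ∈ S.domain) (hm : x ∈ (S.compP T).domain) :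
    S.compP T ⟨x, hm⟩ = S ⟨T ⟨x, hx⟩, hTx⟩ := by
  show S.toFun _ = S.toFun _
  congr 1

variable (Φ : MeasFC X 𝕜 H)

private lemma ap_congr {f g : X → 𝕜} (e : f = g) (x : H) (hx : x ∈ (Φ.ap f).domain)
    (hx' : x ∈ (Φ.ap g).domain) : Φ.ap f ⟨x, hx⟩ = Φ.ap g ⟨x, hx'⟩ := by
  subst e; rfl

private lemma one_domain : (Φ.ap fun _ => (1 : 𝕜)).domain = ⊤ := by
  rw [Φ.mfc1]; rfl

private lemma ap_one (v : (Φ.ap fun _ => (1 : 𝕜)).domain) :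
    Φ.ap (fun _ => (1 : 𝕜)) v = ↑v := by
  have h2 := Φ.mfc1.le.2 (x := v) (y := ⟨↑v, Submodule.mem_top⟩) rfl
  simpa [LinearMap.toPMap_apply] using h2

private lemma ap_smul (c : 𝕜) (f : X → 𝕜) (hf : Measurable f) (x : H)
    (hx : x ∈ (Φ.ap f).domain) (hx' : x ∈ (Φ.ap fun t => c * f t).domain) :
    Φ.ap (fun t => c * f t) ⟨x, hx'⟩ = c • Φ.ap f ⟨x, hx⟩ := by
  have hle := Φ.mfc2_smul c f hf
  have h2 := hle.2 (x := (⟨x, hx⟩ : (c • Φ.ap f).domain)) (y := ⟨x, hx'⟩) rfl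
  rw [LinearPMap.smul_apply] at h2
  exact h2.symm

private lemma ap_const (c : 𝕜) (x : H) (hx : x ∈ (Φ.ap fun _ : X => c).domain) :
    Φ.ap (fun _ : X => c) ⟨x, hx⟩ = c • x := by
  have hx1 : x ∈ (Φ.ap fun _ : X => (1 : 𝕜)).domain := memTop (one_domain Φ) x
  have e : (fun t : X => c * (1 : 𝕜)) = fun _ => c := by funext t; simp
  have hx' : x ∈ (Φ.ap fun t : X => c * (1 : 𝕜)).domain := by rw [e]; exact hx
  have h := ap_smul Φ c (fun _ => 1) measurable_const x hx1 hx'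
  rw [ap_one] at h
  rw [← ap_congr Φ e x hx' hx, h]

private lemma ap_add (f g : X → 𝕜) (hf : Measurable f) (hg : Measurable g) (x : H)
    (hxf : x ∈ (Φ.ap f).domain) (hxg : x ∈ (Φ.ap g).domain)
    (hxfg : x ∈ (Φ.ap (f + g)).domain) :
    Φ.ap (f + g) ⟨x, hxfg⟩ = Φ.ap f ⟨x, hxf⟩ + Φ.ap g ⟨x, hxg⟩ := by
  have hle := Φ.mfc2_add f g hf hg
  have hx : x ∈ (Φ.ap f + Φ.ap g).domain := ⟨hxf, hxg⟩
  have h2 := hle.2 (x := ⟨x, hx⟩) (y := ⟨x, hxfg⟩) rfl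
  rw [LinearPMap.add_apply] at h2
  exact h2.symm

private lemma ap_mul (f g : X → 𝕜) (hf : Measurable f) (hg : Measurable g) (x : H)
    (hx : x ∈ (Φ.ap g).domain) (hTx : Φ.ap g ⟨x, hx⟩ ∈ (Φ.ap f).domain)
    (hm : x ∈ (Φ.ap (f * g)).domain) :
    Φ.ap (f * g) ⟨x, hm⟩ = Φ.ap f ⟨Φ.ap g ⟨x, hx⟩, hTx⟩ := by
  have hle := Φ.mfc3_le f g hf hg
  have hcm : x ∈ ((Φ.ap f).compP (Φ.ap g)).domain :=
    Submodule.mem_map.mpr ⟨⟨x, hx⟩, Submodule.mem_comap.mpr hTx, rfl⟩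
  have h2 := hle.2 (x := ⟨x, hcm⟩) (y := ⟨x, hm⟩) rfl
  rw [compP_apply x hx hTx hcm] at h2
  exact h2.symm

private lemma ap_inner (f : X → 𝕜) (hf : Measurable f) (hb : ∃ C, ∀ t, ‖f t‖ ≤ C)
    (x y : H) (hx : x ∈ (Φ.ap f).domain)
    (hy : y ∈ (Φ.ap fun t => starRingEnd 𝕜 (f t)).domain) :
    ⟪Φ.ap f ⟨x, hx⟩, y⟫ = ⟪x, Φ.ap (fun t => starRingEnd 𝕜 (f t)) ⟨y, hy⟩⟫ := by
  set g : X → 𝕜 := fun t => starRingEnd 𝕜 (f t) with hgdef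
  have hgm : Measurable g := RCLike.continuous_conj.measurable.comp hf
  have hgb : ∃ C, ∀ t, ‖g t‖ ≤ C := hb.imp fun C hC t => by
    simpa [hgdef, RCLike.norm_conj] using hC t
  have hdense : Dense ((Φ.ap g).domain : Set H) := dense_of_top (Φ.mfc4_dom g hgm hgb)
  have hstar := Φ.mfc4_star g hgm hgb
  have hgg : (fun t => starRingEnd 𝕜 (g t)) = f := by
    funext t; simp [hgdef, RCLike.conj_conj]
  rw [hgg] at hstar
  have hfa := LinearPMap.adjoint_isFormalAdjoint hdense
  have hxd : x ∈ ((Φ.ap g).adjoint).domain := by rw [hstar]; exact hx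
  have h2 := hfa ⟨x, hxd⟩ ⟨y, hy⟩
  have h3 : (Φ.ap g).adjoint ⟨x, hxd⟩ = Φ.ap f ⟨x, hx⟩ := hstar.le.2 rfl
  rw [h3] at h2
  exact h2

private lemma ap_inner_self (f : X → 𝕜) (hf : Measurable f) (hb : ∃ C, ∀ t, ‖f t‖ ≤ C)
    (x : H) (hx : x ∈ (Φ.ap f).domain)
    (hm : x ∈ (Φ.ap fun t => starRingEnd 𝕜 (f t) * f t).domain) :
    ⟪x, Φ.ap (fun t => starRingEnd 𝕜 (f t) * f t) ⟨x, hm⟩⟫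
      = ⟪Φ.ap f ⟨x, hx⟩, Φ.ap f ⟨x, hx⟩⟫ := by
  have hgm : Measurable (fun t => starRingEnd 𝕜 (f t)) :=
    RCLike.continuous_conj.measurable.comp hf
  have hgb : ∃ C, ∀ t, ‖starRingEnd 𝕜 (f t)‖ ≤ C := hb.imp fun C hC t => by
    simpa [RCLike.norm_conj] using hC t
  have hTx : Φ.ap f ⟨x, hx⟩ ∈ (Φ.ap fun t => starRingEnd 𝕜 (f t)).domain :=
    memTop (Φ.mfc4_dom _ hgm hgb) _
  have e : (fun t => starRingEnd 𝕜 (f t) * f t) = (fun t => starRingEnd 𝕜 (f t)) * f := rfl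
  have hm2 : x ∈ (Φ.ap ((fun t => starRingEnd 𝕜 (f t)) * f)).domain := by
    rw [← e]; exact hm
  rw [ap_congr Φ e x hm hm2, ap_mul Φ _ f hgm hf x hx hTx hm2,
    ← ap_inner Φ f hf hb x _ hx hTx]

end MFCProof

section MFCParts

local notation "⟪" x ", " y "⟫" => @inner 𝕜 _ _ x y

variable (Φ : MeasFC X 𝕜 H)

private lemma part_d : ∀ f : X → 𝕜, Measurable f → Dense ((Φ.ap f).domain : Set H) := by
  intro f hf
  set D := (Φ.ap f).domain with hD
  set e : ℕ → X → 𝕜 := fun n => ({t | ‖f t‖ ≤ (n : ℝ)}).indicator (fun _ => 1) with he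
  have hBm : ∀ n : ℕ, MeasurableSet {t | ‖f t‖ ≤ (n : ℝ)} := fun n =>
    measurableSet_le hf.norm measurable_const
  have hem : ∀ n, Measurable (e n) := fun n => measurable_const.indicator (hBm n)
  have heb : ∀ n t, ‖e n t‖ ≤ 1 := fun n t => by
    by_cases h : t ∈ {t | ‖f t‖ ≤ (n : ℝ)} <;>
      simp [he, Set.indicator_apply, h]
  have hed : ∀ n, (Φ.ap (e n)).domain = ⊤ := fun n => Φ.mfc4_dom _ (hem n) ⟨1, heb n⟩
  have hfeb : ∀ n : ℕ, ∃ C, ∀ t, ‖(f * e n) t‖ ≤ C := fun n => ⟨n, fun t => by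
    by_cases h : t ∈ {t | ‖f t‖ ≤ (n : ℝ)}
    · simpa [he, Pi.mul_apply, Set.indicator_of_mem h] using h
    · simp [he, Pi.mul_apply, Set.indicator_of_notMem h]⟩
  have hfed : ∀ n, (Φ.ap (f * e n)).domain = ⊤ := fun n =>
    Φ.mfc4_dom _ (hf.mul (hem n)) (hfeb n)
  have hcomp : ∀ n, ((Φ.ap f).compP (Φ.ap (e n))).domain = ⊤ := fun n => by
    rw [Φ.mfc3_dom f (e n) hf (hem n), hed n, hfed n]; simp
  have hmemD : ∀ (n : ℕ) (z : H), Φ.ap (e n) ⟨z, memTop (hed n) z⟩ ∈ D := fun n z =>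
    compP_mem (hcomp n) z _
  have hlim : ∀ t, Filter.Tendsto (fun n => e n t) Filter.atTop (𝓝 1) := fun t => by
    apply tendsto_atTop_of_eventually_const (i₀ := ⌈‖f t‖⌉₊)
    intro n hn
    have ht : t ∈ {t | ‖f t‖ ≤ (n : ℝ)} := by
      simp only [Set.mem_setOf_eq]
      exact (Nat.le_ceil _).trans (by exact_mod_cast hn)
    simp [he, Set.indicator_of_mem ht]
  suffices hDbot : Dᗮ = ⊥ by
    rw [hD, Submodule.dense_iff_topologicalClosure_eq_top,
      ← Submodule.orthogonal_orthogonal_eq_closure, ← hD, hDbot,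
      Submodule.bot_orthogonal_eq_top]
  rw [Submodule.eq_bot_iff]
  intro z hz
  have h5 := Φ.mfc5 e (fun _ => 1) hem measurable_const ⟨1, heb⟩ hlim z z
      (fun n => memTop (hed n) z) (memTop (one_domain Φ) z)
  rw [ap_one] at h5
  have hzero : ∀ n, (⟪Φ.ap (e n) ⟨z, memTop (hed n) z⟩, z⟫ : 𝕜) = 0 := fun n =>
    (Submodule.mem_orthogonal _ z).mp hz _ (hmemD n z)
  have hz2 : (⟪z, z⟫ : 𝕜) = 0 := by
    have hconst : Filter.Tendsto (fun _ : ℕ => (0 : 𝕜)) Filter.atTop (𝓝 ⟪z, z⟫) :=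
      h5.congr hzero
    exact tendsto_nhds_unique hconst tendsto_const_nhds
  exact inner_self_eq_zero.mp hz2

private lemma part_e : ∀ f : X → 𝕜, Measurable f → ∀ C : ℝ, (∀ t, ‖f t‖ ≤ C) →
    ∀ x : (Φ.ap f).domain, ‖Φ.ap f x‖ ≤ C * ‖(x : H)‖ := by
  intro f hf C hC x
  obtain ⟨z, hz⟩ := x
  by_cases hC0 : 0 ≤ C
  · set h : X → 𝕜 := fun t => ((Real.sqrt (C ^ 2 - ‖f t‖ ^ 2) : ℝ) : 𝕜) with hh
    have hhm : Measurable h :=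
      RCLike.continuous_ofReal.measurable.comp
        ((measurable_const.sub (hf.norm.pow_const 2)).sqrt)
    have hfb : ∃ C', ∀ t, ‖f t‖ ≤ C' := ⟨C, hC⟩
    have hsub : ∀ t, 0 ≤ C ^ 2 - ‖f t‖ ^ 2 := fun t => by
      nlinarith [hC t, norm_nonneg (f t)]
    have hhnorm : ∀ t, ‖h t‖ = Real.sqrt (C ^ 2 - ‖f t‖ ^ 2) := fun t => by
      rw [hh]
      simp [RCLike.norm_ofReal, abs_of_nonneg (Real.sqrt_nonneg _)]
    have hhb : ∃ C', ∀ t, ‖h t‖ ≤ C' := ⟨C, fun t => by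
      rw [hhnorm t]
      calc Real.sqrt (C ^ 2 - ‖f t‖ ^ 2) ≤ Real.sqrt (C ^ 2) :=
            Real.sqrt_le_sqrt (by nlinarith [norm_nonneg (f t)])
        _ = C := by rw [Real.sqrt_sq hC0]⟩
    set F1 : X → 𝕜 := fun t => starRingEnd 𝕜 (f t) * f t with hF1
    set F2 : X → 𝕜 := fun t => starRingEnd 𝕜 (h t) * h t with hF2
    have hF1m : Measurable F1 := (RCLike.continuous_conj.measurable.comp hf).mul hf
    have hF2m : Measurable F2 := (RCLike.continuous_conj.measurable.comp hhm).mul hhm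
    have hF1b : ∃ C', ∀ t, ‖F1 t‖ ≤ C' := ⟨C ^ 2, fun t => by
      rw [hF1]
      simp only [norm_mul, RCLike.norm_conj]
      nlinarith [hC t, norm_nonneg (f t)]⟩
    have hF2b : ∃ C', ∀ t, ‖F2 t‖ ≤ C' := by
      obtain ⟨C', hC'⟩ := hhb
      exact ⟨C' ^ 2, fun t => by
        rw [hF2]
        simp only [norm_mul, RCLike.norm_conj]
        nlinarith [hC' t, norm_nonneg (h t)]⟩
    have hkey : F1 + F2 = fun _ : X => ((C ^ 2 : ℝ) : 𝕜) := by
      funext t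
      have hht : ‖h t‖ ^ 2 = C ^ 2 - ‖f t‖ ^ 2 := by
        rw [hhnorm t, Real.sq_sqrt (hsub t)]
      show starRingEnd 𝕜 (f t) * f t + starRingEnd 𝕜 (h t) * h t = _
      rw [RCLike.conj_mul, RCLike.conj_mul]
      rw [show ((C ^ 2 : ℝ) : 𝕜) = ((‖f t‖ ^ 2 + ‖h t‖ ^ 2 : ℝ) : 𝕜) by rw [hht]; push_cast; ring]
      push_cast
      ring
    -- memberships
    have hmF1 : z ∈ (Φ.ap F1).domain := memTop (Φ.mfc4_dom _ hF1m hF1b) z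
    have hmF2 : z ∈ (Φ.ap F2).domain := memTop (Φ.mfc4_dom _ hF2m hF2b) z
    have hmS : z ∈ (Φ.ap (F1 + F2)).domain := by
      rw [hkey]
      exact memTop (Φ.mfc4_dom _ measurable_const ⟨‖((C ^ 2 : ℝ) : 𝕜)‖, fun t => le_rfl⟩) z
    have hmC : z ∈ (Φ.ap fun _ : X => ((C ^ 2 : ℝ) : 𝕜)).domain := by rw [← hkey]; exact hmS
    have hzh : z ∈ (Φ.ap h).domain := memTop (Φ.mfc4_dom _ hhm hhb) z
    have hsum := ap_add Φ F1 F2 hF1m hF2m z hmF1 hmF2 hmS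
    have hconst : Φ.ap (F1 + F2) ⟨z, hmS⟩ = ((C ^ 2 : ℝ) : 𝕜) • z := by
      rw [ap_congr Φ hkey z hmS hmC]
      exact ap_const Φ _ z hmC
    have e1 := ap_inner_self Φ f hf hfb z hz hmF1
    have e2 := ap_inner_self Φ h hhm hhb z hzh hmF2
    have hmain : ⟪Φ.ap f ⟨z, hz⟩, Φ.ap f ⟨z, hz⟩⟫ + ⟪Φ.ap h ⟨z, hzh⟩, Φ.ap h ⟨z, hzh⟩⟫
        = ((C ^ 2 : ℝ) : 𝕜) * ⟪z, z⟫ := by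
      rw [← e1, ← e2, ← inner_add_right, ← hsum, hconst, inner_smul_right]
    have hre := congrArg RCLike.re hmain
    simp only [map_add, inner_self_eq_norm_sq, RCLike.re_ofReal_mul] at hre
    have hsq : ‖Φ.ap f ⟨z, hz⟩‖ ^ 2 ≤ (C * ‖z‖) ^ 2 := by
      nlinarith [sq_nonneg ‖Φ.ap h ⟨z, hzh⟩‖, hre]
    have hfinal := le_of_pow_le_pow_left₀ two_ne_zero (by positivity) hsq
    simpa using hfinal
  · have hXe : IsEmpty X := ⟨fun t => hC0 ((norm_nonneg (f t)).trans (hC t))⟩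
    have hH : ∀ v : H, v = 0 := by
      intro v
      have h1 : v ∈ (Φ.ap fun _ : X => (1 : 𝕜)).domain := memTop (one_domain Φ) v
      have e : (fun _ : X => (1 : 𝕜)) = fun _ => (2 : 𝕜) := funext fun t => (hXe.false t).elim
      have h2 : v ∈ (Φ.ap fun _ : X => (2 : 𝕜)).domain := by rw [← e]; exact h1
      have hveq : v = (2 : 𝕜) • v :=
        (ap_one Φ ⟨v, h1⟩).symm.trans ((ap_congr Φ e v h1 h2).trans (ap_const Φ 2 v h2))
      have hv : v + v = v := by rw [← two_smul 𝕜 v]; exact hveq.symm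
      have := congrArg (fun w => w - v) hv
      simpa using this
    have hx0 : Φ.ap f ⟨z, hz⟩ = 0 := hH _
    have hz0 : z = 0 := hH z
    rw [hx0]
    simp [hz0]

private lemma part_f : ∀ (f : ℕ → X → 𝕜) (g : X → 𝕜), (∀ n, Measurable (f n)) →
    Measurable g → (∃ C, ∀ n x, ‖f n x‖ ≤ C) →
    (∀ x, Filter.Tendsto (fun n => f n x) Filter.atTop (𝓝 (g x))) →
    ∀ (x : H) (hn : ∀ n, x ∈ (Φ.ap (f n)).domain) (hg : x ∈ (Φ.ap g).domain),
      Filter.Tendsto (fun n => Φ.ap (f n) ⟨x, hn n⟩) Filter.atTop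
        (𝓝 (Φ.ap g ⟨x, hg⟩)) := by
  intro f g hfm hgm hfb hlim x hn hg
  obtain ⟨C, hC⟩ := hfb
  have hgb : ∀ t, ‖g t‖ ≤ C := fun t =>
    le_of_tendsto (hlim t).norm (Filter.Eventually.of_forall fun n => hC n t)
  set d : ℕ → X → 𝕜 := fun n t => f n t - g t with hd
  have hdm : ∀ n, Measurable (d n) := fun n => (hfm n).sub hgm
  have hdb : ∀ n t, ‖d n t‖ ≤ 2 * C := fun n t =>
    (norm_sub_le _ _).trans (by linarith [hC n t, hgb t])
  set G : ℕ → X → 𝕜 := fun n t => starRingEnd 𝕜 (d n t) * d n t with hG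
  have hGm : ∀ n, Measurable (G n) := fun n =>
    (RCLike.continuous_conj.measurable.comp (hdm n)).mul (hdm n)
  have hGb : ∃ C', ∀ n t, ‖G n t‖ ≤ C' := ⟨(2 * C) ^ 2, fun n t => by
    show ‖starRingEnd 𝕜 (d n t) * d n t‖ ≤ _
    rw [norm_mul, RCLike.norm_conj]
    nlinarith [hdb n t, norm_nonneg (d n t)]⟩
  have hGlim : ∀ t, Filter.Tendsto (fun n => G n t) Filter.atTop (𝓝 0) := fun t => by
    have h1 : Filter.Tendsto (fun n => d n t) Filter.atTop (𝓝 0) := by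
      simpa using (hlim t).sub (tendsto_const_nhds (x := g t))
    have h2 := ((RCLike.continuous_conj.tendsto (0 : 𝕜)).comp h1).mul h1
    simpa using h2
  have hGd : ∀ n, x ∈ (Φ.ap (G n)).domain := fun n => by
    obtain ⟨C', hC'⟩ := hGb
    exact memTop (Φ.mfc4_dom (G n) (hGm n) ⟨C', fun t => hC' n t⟩) x
  have h0dom : (Φ.ap fun _ : X => (0 : 𝕜)).domain = ⊤ :=
    Φ.mfc4_dom _ measurable_const ⟨0, by simp⟩
  have h5 := Φ.mfc5 G (fun _ => 0) hGm measurable_const hGb hGlim x x hGd (memTop h0dom x)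
  have h0 : Φ.ap (fun _ : X => (0 : 𝕜)) ⟨x, memTop h0dom x⟩ = 0 := by
    rw [ap_const Φ 0 x (memTop h0dom x), zero_smul]
  rw [h0, inner_zero_left] at h5
  have hre5 : Filter.Tendsto (fun n => RCLike.re (⟪Φ.ap (G n) ⟨x, hGd n⟩, x⟫ : 𝕜))
      Filter.atTop (𝓝 0) := by
    have := (RCLike.continuous_re.tendsto (0 : 𝕜)).comp h5
    simpa [Function.comp_def] using this
  have hdd : ∀ n, x ∈ (Φ.ap (d n)).domain := fun n =>
    memTop (Φ.mfc4_dom (d n) (hdm n) ⟨2 * C, hdb n⟩) x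
  have hkey : ∀ n, ‖Φ.ap (f n) ⟨x, hn n⟩ - Φ.ap g ⟨x, hg⟩‖
      = Real.sqrt (RCLike.re (⟪Φ.ap (G n) ⟨x, hGd n⟩, x⟫ : 𝕜)) := by
    intro n
    have e : d n + g = f n := by funext t; show f n t - g t + g t = f n t; ring
    have hadd : x ∈ (Φ.ap (d n + g)).domain := by rw [e]; exact hn n
    have hsum := ap_add Φ (d n) g (hdm n) hgm x (hdd n) hg hadd
    have hfn : Φ.ap (f n) ⟨x, hn n⟩ = Φ.ap (d n) ⟨x, hdd n⟩ + Φ.ap g ⟨x, hg⟩ := by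
      rw [← ap_congr Φ e x hadd (hn n)]; exact hsum
    have hdiff : Φ.ap (f n) ⟨x, hn n⟩ - Φ.ap g ⟨x, hg⟩ = Φ.ap (d n) ⟨x, hdd n⟩ := by
      rw [hfn]; abel
    have hinner := ap_inner_self Φ (d n) (hdm n) ⟨2 * C, hdb n⟩ x (hdd n) (hGd n)
    have hre : RCLike.re (⟪Φ.ap (G n) ⟨x, hGd n⟩, x⟫ : 𝕜) = ‖Φ.ap (d n) ⟨x, hdd n⟩‖ ^ 2 := by
      rw [← inner_re_symm, hinner, inner_self_eq_norm_sq]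
    rw [hdiff, hre, Real.sqrt_sq (norm_nonneg _)]
  rw [tendsto_iff_norm_sub_tendsto_zero]
  have hsqrt : Filter.Tendsto
      (fun n => Real.sqrt (RCLike.re (⟪Φ.ap (G n) ⟨x, hGd n⟩, x⟫ : 𝕜)))
      Filter.atTop (𝓝 0) := by
    have := (Real.continuous_sqrt.tendsto 0).comp hre5
    simpa [Function.comp_def] using this
  exact hsqrt.congr fun n => (hkey n).symm

end MFCParts

/-- Theorem 2.1 (d), (e), (f): every `Φ(f)` is densely defined; `‖Φ(f)‖ ≤ ‖f‖_∞` for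
bounded `f`; and `Φ` is (strongly) bp-continuous. -/
theorem mfc_dense_contractive_bpContinuous (Φ : MeasFC X 𝕜 H) :
    -- (d) densely defined
    (∀ f : X → 𝕜, Measurable f → Dense ((Φ.ap f).domain : Set H)) ∧
    -- (e) norm bound by the sup norm
    (∀ (f : X → 𝕜), Measurable f → ∀ C : ℝ, (∀ x, ‖f x‖ ≤ C) →
      ∀ x : (Φ.ap f).domain, ‖Φ.ap f x‖ ≤ C * ‖(x : H)‖) ∧
    -- (f) bp-continuity in the strong sense
    (∀ (f : ℕ → X → 𝕜) (g : X → 𝕜), (∀ n, Measurable (f n)) → Measurable g →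
      (∃ C, ∀ n x, ‖f n x‖ ≤ C) →
      (∀ x, Filter.Tendsto (fun n => f n x) Filter.atTop (𝓝 (g x))) →
      ∀ (x : H) (hn : ∀ n, x ∈ (Φ.ap (f n)).domain) (hg : x ∈ (Φ.ap g).domain),
        Filter.Tendsto (fun n => Φ.ap (f n) ⟨x, hn n⟩) Filter.atTop
          (𝓝 (Φ.ap g ⟨x, hg⟩))) :=
  ⟨part_d Φ, part_e Φ, part_f Φ⟩

end
end

section
/- Let Φ be a measurable functional calculus on (X, Σ) and let f, g : X → 𝕜 be measurable. Then: (a) dom(Φ(f)) ∩ dom(Φ(g)) is a core for Φ(g), i.e. Φ(g) is the closure of its restriction to dom(Φ(f)) ∩ dom(Φ(g)); (b) the closure of the operator Φ(f) + Φ(g) equals Φ(f + g), and the closure of the operator Φ(f)Φ(g) equals Φ(fg). -/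
open scoped Topology

noncomputable section

namespace MFCProof

variable {𝕜 : Type*} [RCLike 𝕜] {X : Type*} [MeasurableSpace X]
  {H : Type*} [NormedAddCommGroup H] [InnerProductSpace 𝕜 H] [CompleteSpace H]

local notation "⟪" x ", " y "⟫" => @inner 𝕜 _ _ x y

theorem pmap_congr {A B : H →ₗ.[𝕜] H} (h : A = B) {x : H} (hx : x ∈ A.domain) (hx' : x ∈ B.domain) :
    A ⟨x, hx⟩ = B ⟨x, hx'⟩ := by subst h; rfl

theorem compP_mem_domain {S T : H →ₗ.[𝕜] H} {x : H} (hx : x ∈ T.domain)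
    (hTx : T ⟨x, hx⟩ ∈ S.domain) : x ∈ (S.compP T).domain :=
  Submodule.mem_map.mpr ⟨⟨x, hx⟩, hTx, rfl⟩

theorem compP_mem_iff {S T : H →ₗ.[𝕜] H} {x : H} :
    x ∈ (S.compP T).domain ↔ ∃ hx : x ∈ T.domain, T ⟨x, hx⟩ ∈ S.domain := by
  constructor
  · rintro ⟨z, hz, rfl⟩
    exact ⟨z.2, hz⟩
  · rintro ⟨hx, hTx⟩; exact ⟨⟨x, hx⟩, hTx, rfl⟩

theorem compP_apply {S T : H →ₗ.[𝕜] H} {x : H} (hm : x ∈ (S.compP T).domain)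
    (hx : x ∈ T.domain) (hTx : T ⟨x, hx⟩ ∈ S.domain) :
    S.compP T ⟨x, hm⟩ = S ⟨T ⟨x, hx⟩, hTx⟩ := rfl

variable (Φ : MeasFC X 𝕜 H)

theorem dom_top {u : X → 𝕜} (hm : Measurable u) (hb : ∃ C, ∀ x, ‖u x‖ ≤ C) (y : H) :
    y ∈ (Φ.ap u).domain := by
  rw [Φ.mfc4_dom u hm hb]; trivial

open Classical in
/-- Total version of `Φ.ap u`, with junk value `0` outside the domain. -/
noncomputable def apF (u : X → 𝕜) (y : H) : H :=
  if h : y ∈ (Φ.ap u).domain then Φ.ap u ⟨y, h⟩ else 0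

theorem apF_eq {u : X → 𝕜} {y : H} (h : y ∈ (Φ.ap u).domain) :
    apF Φ u y = Φ.ap u ⟨y, h⟩ := dif_pos h

theorem apF_one (y : H) : apF Φ (fun _ => (1 : 𝕜)) y = y := by
  have hd : y ∈ (Φ.ap (fun _ => (1 : 𝕜))).domain := by
    rw [Φ.mfc1, LinearMap.toPMap_domain]; trivial
  rw [apF_eq Φ hd, pmap_congr Φ.mfc1 hd (by rw [LinearMap.toPMap_domain]; exact Submodule.mem_top)]
  rfl

theorem apF_smul (c : 𝕜) {u : X → 𝕜} (hu : Measurable u) {y : H} (hy : y ∈ (Φ.ap u).domain) :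
    apF Φ (fun x => c * u x) y = c • Φ.ap u ⟨y, hy⟩ := by
  have hle := Φ.mfc2_smul c u hu
  have hy' : y ∈ (c • Φ.ap u).domain := hy
  rw [apF_eq Φ (hle.1 hy'), ← hle.2 (x := ⟨y, hy'⟩) rfl, LinearPMap.smul_apply]

theorem apF_zero (y : H) : apF Φ (fun _ => (0 : 𝕜)) y = 0 := by
  have h1 : (fun x : X => (0 : 𝕜) * (fun _ : X => (1 : 𝕜)) x) = fun _ : X => (0 : 𝕜) := by
    funext x; simp
  have := apF_smul Φ (0 : 𝕜) (u := fun _ => (1 : 𝕜)) measurable_const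
    (y := y) (by rw [Φ.mfc1, LinearMap.toPMap_domain]; trivial)
  rw [h1] at this
  simp [this]

theorem apF_add {u v : X → 𝕜} (hu : Measurable u) (hv : Measurable v) {y : H}
    (hyu : y ∈ (Φ.ap u).domain) (hyv : y ∈ (Φ.ap v).domain) :
    apF Φ (u + v) y = Φ.ap u ⟨y, hyu⟩ + Φ.ap v ⟨y, hyv⟩ := by
  have hle := Φ.mfc2_add u v hu hv
  have hy : y ∈ (Φ.ap u + Φ.ap v).domain := Submodule.mem_inf.mpr ⟨hyu, hyv⟩
  rw [apF_eq Φ (hle.1 hy), ← hle.2 (x := ⟨y, hy⟩) rfl, LinearPMap.add_apply]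

/-- Composition with a bounded function on the left: `Φ(u·h) x = Φ(u) (Φ(h) x)`. -/
theorem apF_comp_left {u h : X → 𝕜} (hum : Measurable u) (hhm : Measurable h)
    (hub : ∃ C, ∀ x, ‖u x‖ ≤ C) (huh : ∃ C, ∀ x, ‖(u * h) x‖ ≤ C)
    {x : H} (hx : x ∈ (Φ.ap h).domain) :
    apF Φ (u * h) x = apF Φ u (Φ.ap h ⟨x, hx⟩) := by
  have hTx : Φ.ap h ⟨x, hx⟩ ∈ (Φ.ap u).domain := dom_top Φ hum hub _
  have hc : x ∈ ((Φ.ap u).compP (Φ.ap h)).domain := compP_mem_domain hx hTx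
  have hle := Φ.mfc3_le u h hum hhm
  rw [apF_eq Φ (hle.1 hc), ← hle.2 (x := ⟨x, hc⟩) rfl,
    compP_apply hc hx hTx, apF_eq Φ hTx]

/-- Composition with a bounded function on the right: every `Φ(u) y` lies in `dom Φ(h)`
provided `h·u` is bounded, and `Φ(h·u) y = Φ(h) (Φ(u) y)`. -/
theorem apF_comp_right {u h : X → 𝕜} (hum : Measurable u) (hhm : Measurable h)
    (hub : ∃ C, ∀ x, ‖u x‖ ≤ C) (hhu : ∃ C, ∀ x, ‖(h * u) x‖ ≤ C) (y : H) :
    ∃ hm : apF Φ u y ∈ (Φ.ap h).domain,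
      apF Φ (h * u) y = Φ.ap h ⟨apF Φ u y, hm⟩ := by
  have hyu : y ∈ (Φ.ap u).domain := dom_top Φ hum hub y
  have hy : y ∈ ((Φ.ap h).compP (Φ.ap u)).domain := by
    rw [Φ.mfc3_dom h u hhm hum]
    exact Submodule.mem_inf.mpr ⟨hyu, dom_top Φ (hhm.mul hum) hhu y⟩
  obtain ⟨hy', hTy⟩ := compP_mem_iff.mp hy
  have hval : apF Φ u y = Φ.ap u ⟨y, hy'⟩ := apF_eq Φ hy'
  refine ⟨hval ▸ hTy, ?_⟩
  have hle := Φ.mfc3_le h u hhm hum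
  rw [apF_eq Φ (hle.1 hy), ← hle.2 (x := ⟨y, hy⟩) rfl, compP_apply hy hy' hTy]
  congr 1
  exact Subtype.ext hval.symm

/-- The formal-adjoint identity for bounded functions. -/
theorem inner_conj_apF {u : X → 𝕜} (hum : Measurable u) (hub : ∃ C, ∀ x, ‖u x‖ ≤ C)
    (x y : H) :
    ⟪apF Φ (fun t => starRingEnd 𝕜 (u t)) x, y⟫ = ⟪x, apF Φ u y⟫ := by
  have hcm : Measurable fun t => starRingEnd 𝕜 (u t) :=
    (RCLike.continuous_conj.measurable).comp hum
  have hcb : ∃ C, ∀ x, ‖starRingEnd 𝕜 (u x)‖ ≤ C := by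
    obtain ⟨C, hC⟩ := hub; exact ⟨C, fun x => by simpa using hC x⟩
  have hdense : Dense ((Φ.ap u).domain : Set H) := by
    rw [Φ.mfc4_dom u hum hub]; simp [dense_univ]
  have hfa := LinearPMap.adjoint_isFormalAdjoint hdense
  have hsd : x ∈ (Φ.ap u).adjoint.domain := by
    rw [Φ.mfc4_star u hum hub]; exact dom_top Φ hcm hcb x
  have hy : y ∈ (Φ.ap u).domain := dom_top Φ hum hub y
  have h1 := hfa ⟨x, hsd⟩ ⟨y, hy⟩
  rw [apF_eq Φ (dom_top Φ hcm hcb x), apF_eq Φ hy,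
    ← pmap_congr (Φ.mfc4_star u hum hub) hsd (dom_top Φ hcm hcb x)]
  exact h1

/-- The norm identity `‖Φ(u) y‖² = re ⟪Φ(ū·u) y, y⟫` for bounded `u`. -/
theorem norm_sq_apF {u : X → 𝕜} (hum : Measurable u) (hub : ∃ C, ∀ x, ‖u x‖ ≤ C) (y : H) :
    ‖apF Φ u y‖ ^ 2 = RCLike.re ⟪apF Φ (fun t => starRingEnd 𝕜 (u t) * u t) y, y⟫ := by
  have hcm : Measurable fun t => starRingEnd 𝕜 (u t) :=
    (RCLike.continuous_conj.measurable).comp hum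
  obtain ⟨C, hC⟩ := hub
  have hcb : ∃ C, ∀ x, ‖starRingEnd 𝕜 (u x)‖ ≤ C := ⟨C, fun x => by simpa using hC x⟩
  have hy : y ∈ (Φ.ap u).domain := dom_top Φ hum ⟨C, hC⟩ y
  have hmul : (fun t => starRingEnd 𝕜 (u t) * u t)
      = (fun t => starRingEnd 𝕜 (u t)) * u := rfl
  have hmb : ∃ C', ∀ x, ‖((fun t => starRingEnd 𝕜 (u t)) * u) x‖ ≤ C' := by
    refine ⟨C * C + 1, fun x => ?_⟩
    have h0 : (0:ℝ) ≤ ‖u x‖ := norm_nonneg _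
    have := hC x
    calc ‖starRingEnd 𝕜 (u x) * u x‖ = ‖u x‖ * ‖u x‖ := by
          rw [norm_mul]; simp
      _ ≤ C * C := by nlinarith
      _ ≤ C * C + 1 := by linarith
  rw [hmul, apF_comp_left Φ hcm hum hcb hmb hy,
    inner_conj_apF Φ hum ⟨C, hC⟩ _ y, apF_eq Φ hy, inner_self_eq_norm_sq]

/-- Strong convergence: uniformly bounded pointwise convergence implies
strong convergence of the operators applied to any vector. -/
theorem tendsto_apF {fs : ℕ → X → 𝕜} {h : X → 𝕜} (hfm : ∀ n, Measurable (fs n))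
    (hhm : Measurable h) (hC : ∃ C, ∀ n x, ‖fs n x‖ ≤ C)
    (hconv : ∀ x, Filter.Tendsto (fun n => fs n x) Filter.atTop (𝓝 (h x))) (y : H) :
    Filter.Tendsto (fun n => apF Φ (fs n) y) Filter.atTop (𝓝 (apF Φ h y)) := by
  obtain ⟨C, hC⟩ := hC
  have hhb : ∀ x, ‖h x‖ ≤ C := fun x =>
    le_of_tendsto ((hconv x).norm) (Filter.Eventually.of_forall fun n => hC n x)
  -- the differences and their absolute squares
  set d : ℕ → X → 𝕜 := fun n x => fs n x - h x with hd
  set e : ℕ → X → 𝕜 := fun n x => starRingEnd 𝕜 (d n x) * d n x with he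
  have hdm : ∀ n, Measurable (d n) := fun n => (hfm n).sub hhm
  have hdb : ∀ n x, ‖d n x‖ ≤ C + C := fun n x => by
    calc ‖fs n x - h x‖ ≤ ‖fs n x‖ + ‖h x‖ := norm_sub_le _ _
      _ ≤ C + C := add_le_add (hC n x) (hhb x)
  have hem : ∀ n, Measurable (e n) := fun n =>
    ((RCLike.continuous_conj.measurable).comp (hdm n)).mul (hdm n)
  have heb : ∀ n x, ‖e n x‖ ≤ (C + C) * (C + C) := fun n x => by
    have h1 := hdb n x
    have h0 : (0:ℝ) ≤ ‖d n x‖ := norm_nonneg _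
    calc ‖e n x‖ = ‖d n x‖ * ‖d n x‖ := by rw [he]; rw [norm_mul]; simp
      _ ≤ (C + C) * (C + C) := by nlinarith
  have heconv : ∀ x, Filter.Tendsto (fun n => e n x) Filter.atTop (𝓝 0) := by
    intro x
    have h1 : Filter.Tendsto (fun n => d n x) Filter.atTop (𝓝 0) := by
      simpa using (hconv x).sub_const (h x)
    have h2 := ((RCLike.continuous_conj.tendsto 0).comp h1).mul h1
    simpa using h2
  -- apply mfc5 to `e n → 0`
  have h5 := Φ.mfc5 e (fun _ => (0:𝕜)) hem measurable_const
    ⟨(C + C) * (C + C), heb⟩ heconv y y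
    (fun n => dom_top Φ (hem n) ⟨_, heb n⟩ y)
    (dom_top Φ measurable_const ⟨0, fun _ => by simp⟩ y)
  have h5' : Filter.Tendsto (fun n => (⟪apF Φ (e n) y, y⟫ : 𝕜)) Filter.atTop (𝓝 0) := by
    have hz : Φ.ap (fun _ => (0:𝕜)) ⟨y, dom_top Φ measurable_const ⟨0, fun _ => by simp⟩ y⟩
        = 0 := by
      rw [← apF_eq Φ (dom_top Φ measurable_const ⟨0, fun _ => by simp⟩ y), apF_zero]
    have := h5
    simp only [hz, inner_zero_left] at this
    refine this.congr fun n => ?_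
    rw [apF_eq Φ (dom_top Φ (hem n) ⟨_, heb n⟩ y)]
  -- norm-squared identity
  have hkey : ∀ n, ‖apF Φ (fs n) y - apF Φ h y‖ ^ 2 = RCLike.re ⟪apF Φ (e n) y, y⟫ := by
    intro n
    have hdapp : apF Φ (d n) y = apF Φ (fs n) y - apF Φ h y := by
      have hsum : (fun x => fs n x - h x)
          = (fs n) + (fun x => (-1 : 𝕜) * h x) := by
        funext x
        show fs n x - h x = fs n x + (-1) * h x
        ring
      have hyn : y ∈ (Φ.ap (fs n)).domain := dom_top Φ (hfm n) ⟨C, hC n⟩ y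
      have hyh : y ∈ (Φ.ap h).domain := dom_top Φ hhm ⟨C, hhb⟩ y
      have hneg : y ∈ (Φ.ap (fun x => (-1 : 𝕜) * h x)).domain :=
        dom_top Φ (measurable_const.mul hhm) ⟨C, fun x => by simpa using hhb x⟩ y
      rw [hd]
      show apF Φ (fun x => fs n x - h x) y = _
      rw [hsum, apF_add Φ (v := fun x => (-1 : 𝕜) * h x) (hfm n) (measurable_const.mul hhm) hyn hneg,
        ← apF_eq Φ hneg, apF_smul Φ (-1 : 𝕜) hhm hyh, ← apF_eq Φ hyn, ← apF_eq Φ hyh]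
      module
    have := norm_sq_apF Φ (hdm n) ⟨C + C, hdb n⟩ y
    rw [hdapp] at this
    rw [this]
  -- conclude
  rw [tendsto_iff_norm_sub_tendsto_zero]
  have hre : Filter.Tendsto (fun n => RCLike.re (⟪apF Φ (e n) y, y⟫ : 𝕜))
      Filter.atTop (𝓝 0) := by
    simpa [Function.comp_def] using (RCLike.continuous_re.tendsto 0).comp h5'
  have hsq : Filter.Tendsto (fun n => ‖apF Φ (fs n) y - apF Φ h y‖ ^ 2)
      Filter.atTop (𝓝 0) := by
    refine hre.congr fun n => ?_
    rw [hkey n]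
  have := (Real.continuous_sqrt.tendsto 0).comp hsq
  simp only [Function.comp_def, Real.sqrt_zero] at this
  refine this.congr fun n => ?_
  rw [Real.sqrt_sq (norm_nonneg _)]

/-- The main abstract lemma: if `S ≤ Φ(h)` and the cutoffs `χ n` map `H` into `S.domain`
with `S (Φ(χ n) y) = Φ(χ n · h) y`, then the closure of `S` is `Φ(h)`. -/
theorem closure_eq_ap {S : H →ₗ.[𝕜] H} {h : X → 𝕜} {χ : ℕ → X → 𝕜}
    (hhm : Measurable h) (hχm : ∀ n, Measurable (χ n)) (hχ1 : ∀ n x, ‖χ n x‖ ≤ 1)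
    (hχlim : ∀ x, Filter.Tendsto (fun n => χ n x) Filter.atTop (𝓝 1))
    (hb : ∀ n, ∃ C, ∀ x, ‖(χ n * h) x‖ ≤ C)
    (hST : S ≤ Φ.ap h)
    (hdom : ∀ n (y : H), apF Φ (χ n) y ∈ S.domain)
    (hval : ∀ n (y : H) (hm : apF Φ (χ n) y ∈ S.domain),
      S ⟨apF Φ (χ n) y, hm⟩ = apF Φ (χ n * h) y) :
    S.closure = Φ.ap h := by
  have hclosed : (Φ.ap h).IsClosed := Φ.isClosed h hhm
  have hclble : S.IsClosable := hclosed.isClosable.leIsClosable hST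
  apply le_antisymm
  · calc S.closure ≤ (Φ.ap h).closure := hclosed.isClosable.closure_mono hST
      _ = Φ.ap h := LinearPMap.eq_of_eq_graph (by
          rw [← hclosed.isClosable.graph_closure_eq_closure_graph]
          exact hclosed.submodule_topologicalClosure_eq)
  · apply LinearPMap.le_of_le_graph
    intro p hp
    rw [LinearPMap.mem_graph_iff'] at hp
    obtain ⟨z, rfl⟩ := hp
    rw [← hclble.graph_closure_eq_closure_graph]
    show (↑z, Φ.ap h z) ∈ (S.graph.topologicalClosure : Set (H × H))
    rw [Submodule.topologicalClosure_coe]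
    -- the approximating sequence
    have htend1 : Filter.Tendsto (fun n => apF Φ (χ n) (z : H)) Filter.atTop (𝓝 (z : H)) := by
      have := tendsto_apF Φ hχm measurable_const ⟨1, hχ1⟩ hχlim (z : H)
      rwa [apF_one Φ] at this
    have htend2 : Filter.Tendsto (fun n => apF Φ (χ n * h) (z : H)) Filter.atTop
        (𝓝 (Φ.ap h z)) := by
      have heq : ∀ n, apF Φ (χ n * h) (z : H) = apF Φ (χ n) (Φ.ap h z) := fun n => by
        rw [apF_comp_left Φ (hχm n) hhm ⟨1, hχ1 n⟩ (hb n) z.2]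
      have := tendsto_apF Φ hχm measurable_const ⟨1, hχ1⟩ hχlim (Φ.ap h z)
      rw [apF_one Φ] at this
      exact this.congr fun n => (heq n).symm
    refine mem_closure_of_tendsto (htend1.prodMk_nhds htend2)
      (Filter.Eventually.of_forall fun n => ?_)
    have hmm := hdom n (z : H)
    have hmem : Prod.mk ((⟨apF Φ (χ n) (z : H), hmm⟩ : S.domain) : H)
        (S ⟨apF Φ (χ n) (z : H), hmm⟩) ∈ S.graph := S.mem_graph _
    rw [hval n (z : H) hmm] at hmem
    exact hmem

end MFCProof

variable {𝕜 : Type*} [RCLike 𝕜] {X : Type*} [MeasurableSpace X]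
  {H : Type*} [NormedAddCommGroup H] [InnerProductSpace 𝕜 H] [CompleteSpace H]

/-- Theorem 2.4 (a), (b): `dom Φ(f) ∩ dom Φ(g)` is a core for `Φ(g)`, and the closures of
`Φ(f) + Φ(g)` resp. `Φ(f)Φ(g)` are `Φ(f+g)` resp. `Φ(fg)`. -/
theorem mfc_core_and_closures (Φ : MeasFC X 𝕜 H) (f g : X → 𝕜)
    (hf : Measurable f) (hg : Measurable g) :
    -- (a) dom Φ(f) ⊓ dom Φ(g) is a core for Φ(g)
    ((Φ.ap g).domRestrict ((Φ.ap f).domain ⊓ (Φ.ap g).domain)).closure = Φ.ap g ∧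
    -- (b) closure of the sum and of the product
    (Φ.ap f + Φ.ap g).closure = Φ.ap (f + g) ∧
    ((Φ.ap f).compP (Φ.ap g)).closure = Φ.ap (f * g) := by
  classical
  open MFCProof in
  -- The truncation sets and cutoff functions
  set B : ℕ → Set X := fun n => {x | ‖f x‖ ≤ n ∧ ‖g x‖ ≤ n} with hB
  set χ : ℕ → X → 𝕜 := fun n => (B n).indicator (fun _ => (1 : 𝕜)) with hχ
  have hBmeas : ∀ n, MeasurableSet (B n) := fun n =>
    (measurableSet_le hf.norm measurable_const).inter
      (measurableSet_le hg.norm measurable_const)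
  have hχm : ∀ n, Measurable (χ n) := fun n => measurable_const.indicator (hBmeas n)
  have hχ1 : ∀ n x, ‖χ n x‖ ≤ 1 := fun n x => by
    rw [hχ]
    simp only [Set.indicator_apply]
    split <;> simp
  have hχlim : ∀ x, Filter.Tendsto (fun n => χ n x) Filter.atTop (𝓝 1) := fun x => by
    obtain ⟨N, hN⟩ := exists_nat_ge (max ‖f x‖ ‖g x‖)
    refine tendsto_atTop_of_eventually_const (i₀ := N) fun n hn => ?_
    have hx : x ∈ B n :=
      ⟨le_trans (le_trans (le_max_left _ _) hN) (Nat.cast_le.mpr hn),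
       le_trans (le_trans (le_max_right _ _) hN) (Nat.cast_le.mpr hn)⟩
    rw [hχ]
    simp [Set.indicator_of_mem hx]
  -- boundedness of the truncations
  have hmulbd : ∀ (h : X → 𝕜) (n : ℕ) (C : ℝ), (∀ x ∈ B n, ‖h x‖ ≤ C) →
      ∀ x, ‖(χ n * h) x‖ ≤ max C 0 := by
    intro h n C hC x
    show ‖χ n x * h x‖ ≤ _
    by_cases hx : x ∈ B n
    · rw [hχ]
      simp only [Set.indicator_of_mem hx, one_mul]
      exact le_trans (hC x hx) (le_max_left _ _)
    · rw [hχ]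
      simp only [Set.indicator_of_notMem hx, zero_mul, norm_zero]
      exact le_max_right _ _
  have hbf : ∀ n, ∃ C, ∀ x, ‖(χ n * f) x‖ ≤ C := fun n =>
    ⟨max n 0, hmulbd f n n fun x hx => hx.1⟩
  have hbg : ∀ n, ∃ C, ∀ x, ‖(χ n * g) x‖ ≤ C := fun n =>
    ⟨max n 0, hmulbd g n n fun x hx => hx.2⟩
  have hbsum : ∀ n, ∃ C, ∀ x, ‖(χ n * (f + g)) x‖ ≤ C := fun n =>
    ⟨max (n + n) 0, hmulbd (f + g) n (n + n) fun x hx => by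
      calc ‖f x + g x‖ ≤ ‖f x‖ + ‖g x‖ := norm_add_le _ _
        _ ≤ n + n := add_le_add hx.1 hx.2⟩
  have hbprod : ∀ n, ∃ C, ∀ x, ‖(χ n * (f * g)) x‖ ≤ C := fun n =>
    ⟨max (n * n) 0, hmulbd (f * g) n (n * n) fun x hx => by
      have h1 : (0:ℝ) ≤ ‖g x‖ := norm_nonneg _
      have h2 : (0:ℝ) ≤ (n : ℝ) := le_trans h1 hx.2
      calc ‖f x * g x‖ = ‖f x‖ * ‖g x‖ := norm_mul _ _
        _ ≤ (n : ℝ) * n := mul_le_mul hx.1 hx.2 h1 h2⟩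
  -- memberships coming from `apF_comp_right`
  have hmemf : ∀ n (y : H), apF Φ (χ n) y ∈ (Φ.ap f).domain := fun n y =>
    (apF_comp_right Φ (hχm n) hf ⟨1, hχ1 n⟩
      (by rw [mul_comm]; exact hbf n) y).choose
  have hvalf : ∀ n (y : H),
      apF Φ (f * χ n) y = Φ.ap f ⟨apF Φ (χ n) y, hmemf n y⟩ := fun n y =>
    (apF_comp_right Φ (hχm n) hf ⟨1, hχ1 n⟩
      (by rw [mul_comm]; exact hbf n) y).choose_spec
  have hmemg : ∀ n (y : H), apF Φ (χ n) y ∈ (Φ.ap g).domain := fun n y =>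
    (apF_comp_right Φ (hχm n) hg ⟨1, hχ1 n⟩
      (by rw [mul_comm]; exact hbg n) y).choose
  have hvalg : ∀ n (y : H),
      apF Φ (g * χ n) y = Φ.ap g ⟨apF Φ (χ n) y, hmemg n y⟩ := fun n y =>
    (apF_comp_right Φ (hχm n) hg ⟨1, hχ1 n⟩
      (by rw [mul_comm]; exact hbg n) y).choose_spec
  have hmemp : ∀ n (y : H), apF Φ (χ n) y ∈ (Φ.ap (f * g)).domain := fun n y =>
    (apF_comp_right Φ (hχm n) (hf.mul hg) ⟨1, hχ1 n⟩
      (by rw [mul_comm]; exact hbprod n) y).choose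
  have hvalp : ∀ n (y : H),
      apF Φ (f * g * χ n) y = Φ.ap (f * g) ⟨apF Φ (χ n) y, hmemp n y⟩ := fun n y =>
    (apF_comp_right Φ (hχm n) (hf.mul hg) ⟨1, hχ1 n⟩
      (by rw [mul_comm]; exact hbprod n) y).choose_spec
  refine ⟨?_, ?_, ?_⟩
  -- (a) the core property
  · refine closure_eq_ap Φ hg hχm hχ1 hχlim hbg LinearPMap.domRestrict_le
      (fun n y => Submodule.mem_inf.mpr
        ⟨Submodule.mem_inf.mpr ⟨hmemf n y, hmemg n y⟩, hmemg n y⟩) ?_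
    intro n y hm
    have h1 : (Φ.ap g).domRestrict ((Φ.ap f).domain ⊓ (Φ.ap g).domain)
        ⟨apF Φ (χ n) y, hm⟩ = Φ.ap g ⟨apF Φ (χ n) y, hmemg n y⟩ :=
      LinearPMap.domRestrict_apply rfl
    rw [h1, ← hvalg n y, mul_comm]
  -- (b) the sum
  · refine closure_eq_ap Φ (hf.add hg) hχm hχ1 hχlim hbsum (Φ.mfc2_add f g hf hg)
      (fun n y => Submodule.mem_inf.mpr ⟨hmemf n y, hmemg n y⟩) ?_
    intro n y hm
    have h1 : (Φ.ap f + Φ.ap g) ⟨apF Φ (χ n) y, hm⟩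
        = Φ.ap f ⟨apF Φ (χ n) y, hmemf n y⟩ + Φ.ap g ⟨apF Φ (χ n) y, hmemg n y⟩ := rfl
    have hmf' : Measurable (f * χ n) := hf.mul (hχm n)
    have hmg' : Measurable (g * χ n) := hg.mul (hχm n)
    have hdf : y ∈ (Φ.ap (f * χ n)).domain :=
      dom_top Φ hmf' (by rw [mul_comm]; exact hbf n) y
    have hdg : y ∈ (Φ.ap (g * χ n)).domain :=
      dom_top Φ hmg' (by rw [mul_comm]; exact hbg n) y
    have h2 : apF Φ (f * χ n + g * χ n) y
        = Φ.ap f ⟨apF Φ (χ n) y, hmemf n y⟩ + Φ.ap g ⟨apF Φ (χ n) y, hmemg n y⟩ := by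
      rw [apF_add Φ hmf' hmg' hdf hdg, ← apF_eq Φ hdf, ← apF_eq Φ hdg,
        hvalf n y, hvalg n y]
    have h3 : f * χ n + g * χ n = χ n * (f + g) := by
      funext x
      show f x * χ n x + g x * χ n x = χ n x * (f x + g x)
      ring
    rw [h1, ← h2, h3]
  -- (b) the product
  · have hdm : ∀ n (y : H), apF Φ (χ n) y ∈ ((Φ.ap f).compP (Φ.ap g)).domain := by
      intro n y
      rw [Φ.mfc3_dom f g hf hg]
      exact Submodule.mem_inf.mpr ⟨hmemg n y, hmemp n y⟩
    refine closure_eq_ap Φ (hf.mul hg) hχm hχ1 hχlim hbprod (Φ.mfc3_le f g hf hg)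
      hdm ?_
    intro n y hm
    have hle := Φ.mfc3_le f g hf hg
    rw [hle.2 (x := ⟨apF Φ (χ n) y, hm⟩) (y := ⟨apF Φ (χ n) y, hmemp n y⟩) rfl,
      ← hvalp n y, mul_comm]

end
end

section
/- Let Φ be a measurable functional calculus on (X, Σ) and let f : X → 𝕜 be measurable. Then: (c) the Hilbert-space adjoint of Φ(f) equals Φ(f̄), where f̄ is the complex conjugate of f; (d) Φ(f) is a normal operator and Φ(f̄)Φ(f) = Φ(|f|²) (equality of partially defined operators, where the left-hand side is defined on {x ∈ dom(Φ(f)) : Φ(f)x ∈ dom(Φ(f̄))}). -/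
open scoped Topology

noncomputable section

variable {𝕜 : Type*} [RCLike 𝕜] {X : Type*} [MeasurableSpace X]
  {H : Type*} [NormedAddCommGroup H] [InnerProductSpace 𝕜 H] [CompleteSpace H]


set_option linter.unusedSectionVars false
namespace MFCAux

open Filter LinearPMap

local notation "⟪" x ", " y "⟫" => @inner 𝕜 _ _ x y

theorem pmap_congr {A B : H →ₗ.[𝕜] H} (h : A = B) {x : H} (h1 : x ∈ A.domain)
    (h2 : x ∈ B.domain) : A ⟨x, h1⟩ = B ⟨x, h2⟩ := by subst h; rfl

theorem pmap_congr' {A : H →ₗ.[𝕜] H} {x y : H} (h : x = y) (h1 : x ∈ A.domain)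
    (h2 : y ∈ A.domain) : A ⟨x, h1⟩ = A ⟨y, h2⟩ := by subst h; rfl

theorem compP_mem_domain {S T : H →ₗ.[𝕜] H} {x : H} (hx : x ∈ T.domain)
    (hx' : T ⟨x, hx⟩ ∈ S.domain) : x ∈ (S.compP T).domain :=
  Submodule.mem_map.mpr ⟨⟨x, hx⟩, hx', rfl⟩

theorem compP_mem_domain' {S T : H →ₗ.[𝕜] H} {x : H} (h : x ∈ (S.compP T).domain) :
    ∃ hx : x ∈ T.domain, T ⟨x, hx⟩ ∈ S.domain := by
  obtain ⟨y, hy, hyx⟩ := Submodule.mem_map.mp h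
  have hyx' : (y : H) = x := hyx
  refine ⟨hyx' ▸ y.2, ?_⟩
  have : T ⟨x, hyx' ▸ y.2⟩ = T y := pmap_congr' hyx'.symm _ _
  rw [this]; exact hy

theorem compP_apply {S T : H →ₗ.[𝕜] H} {x : H} (hx : x ∈ T.domain)
    (hx' : T ⟨x, hx⟩ ∈ S.domain) (h : x ∈ (S.compP T).domain) :
    S.compP T ⟨x, h⟩ = S ⟨T ⟨x, hx⟩, hx'⟩ := by
  show S.toFun _ = S.toFun _
  exact congrArg S.toFun (Subtype.ext (congrArg T.toFun (Subtype.ext rfl)))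


section Chi

/-- indicator of `{‖f‖ ≤ n}` -/
def chi (f : X → 𝕜) (n : ℕ) : X → 𝕜 := Set.indicator {x | ‖f x‖ ≤ (n : ℝ)} (fun _ => (1 : 𝕜))

theorem chi_meas {f : X → 𝕜} (hf : Measurable f) (n : ℕ) : Measurable (chi f n) :=
  measurable_const.indicator (measurableSet_le hf.norm measurable_const)

theorem chi_le_one (f : X → 𝕜) (n : ℕ) (x : X) : ‖chi f n x‖ ≤ 1 := by
  by_cases h : x ∈ {x | ‖f x‖ ≤ (n : ℝ)} <;> simp [chi, Set.indicator_apply, h]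

theorem chi_bdd (f : X → 𝕜) (n : ℕ) : ∃ C, ∀ x, ‖chi f n x‖ ≤ C :=
  ⟨1, chi_le_one f n⟩

theorem fchi_bdd (f : X → 𝕜) (n : ℕ) : ∃ C, ∀ x, ‖(f * chi f n) x‖ ≤ C :=
  ⟨n, fun x => by
    by_cases h : x ∈ {x | ‖f x‖ ≤ (n : ℝ)}
    · have h' : ‖f x‖ ≤ (n : ℝ) := h
      simp [chi, Set.indicator_apply, h']
    · simp [chi, Set.indicator_apply, h]⟩

theorem gchi_bdd (f : X → 𝕜) (n : ℕ) :
    ∃ C, ∀ x, ‖((fun x => (starRingEnd 𝕜) (f x) * f x) * chi f n) x‖ ≤ C :=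
  ⟨n * n, fun x => by
    by_cases h : x ∈ {x | ‖f x‖ ≤ (n : ℝ)}
    · have h' : ‖f x‖ ≤ (n : ℝ) := h
      simp only [chi, Set.indicator_apply, h, if_pos, Pi.mul_apply, Set.mem_setOf_eq, if_true,
        mul_one, norm_mul, RCLike.norm_conj]
      exact mul_le_mul h' h' (norm_nonneg _) (Nat.cast_nonneg n)
    · simp [chi, Set.indicator_apply, h]
      positivity⟩

theorem conj_chi (f : X → 𝕜) (n : ℕ) :
    (fun x => (starRingEnd 𝕜) (chi f n x)) = chi f n := by
  funext x
  by_cases h : x ∈ {x | ‖f x‖ ≤ (n : ℝ)} <;> simp [chi, Set.indicator_apply, h]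

theorem chi_conj (f : X → 𝕜) (n : ℕ) :
    chi (fun x => (starRingEnd 𝕜) (f x)) n = chi f n := by
  funext x
  simp [chi, Set.indicator_apply, RCLike.norm_conj]

theorem chi_mul_chi (f : X → 𝕜) (n : ℕ) : chi f n * chi f n = chi f n := by
  funext x
  by_cases h : x ∈ {x | ‖f x‖ ≤ (n : ℝ)} <;> simp [chi, Set.indicator_apply, h]

theorem conj_fchi (f : X → 𝕜) (n : ℕ) :
    (fun x => (starRingEnd 𝕜) ((f * chi f n) x)) =
      (fun x => (starRingEnd 𝕜) (f x)) * chi f n := by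
  funext x
  by_cases h : x ∈ {x | ‖f x‖ ≤ (n : ℝ)} <;> simp [chi, Set.indicator_apply, h]

theorem conj_fchi_mul (f : X → 𝕜) {m n : ℕ} (hmn : m ≤ n) :
    (fun x => (starRingEnd 𝕜) ((f * chi f n) x)) * (f * chi f m) =
      (fun x => (starRingEnd 𝕜) (f x) * f x) * chi f m := by
  funext x
  by_cases h : ‖f x‖ ≤ (m : ℝ)
  · have h2 : ‖f x‖ ≤ (n : ℝ) := le_trans h (Nat.cast_le.mpr hmn)
    simp [chi, Set.indicator_apply, h, h2, mul_comm]
  · by_cases h2 : ‖f x‖ ≤ (n : ℝ) <;>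
      simp [chi, Set.indicator_apply, h, h2]

theorem conj_fchi_mul' (f : X → 𝕜) {m n : ℕ} (hmn : m ≤ n) :
    (fun x => (starRingEnd 𝕜) ((f * chi f m) x)) * (f * chi f n) =
      (fun x => (starRingEnd 𝕜) (f x) * f x) * chi f m := by
  funext x
  by_cases h : ‖f x‖ ≤ (m : ℝ)
  · have h2 : ‖f x‖ ≤ (n : ℝ) := le_trans h (Nat.cast_le.mpr hmn)
    simp [chi, Set.indicator_apply, h, h2, mul_comm]
  · by_cases h2 : ‖f x‖ ≤ (n : ℝ) <;>
      simp [chi, Set.indicator_apply, h, h2]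

theorem chi_tendsto (f : X → 𝕜) (x : X) :
    Filter.Tendsto (fun n => chi f n x) Filter.atTop (nhds 1) := by
  refine tendsto_atTop_of_eventually_const (i₀ := ⌈‖f x‖⌉₊) fun n hn => ?_
  have h : x ∈ {x | ‖f x‖ ≤ (n : ℝ)} :=
    le_trans (Nat.le_ceil _) (Nat.cast_le.mpr hn)
  simp [chi, Set.indicator_apply, h]

end Chi


section Ops

variable (Φ : MeasFC X 𝕜 H)

theorem memTop {g : X → 𝕜} (h : (Φ.ap g).domain = ⊤) (x : H) : x ∈ (Φ.ap g).domain :=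
  Submodule.eq_top_iff'.mp h x

theorem dense_of_top {g : X → 𝕜} (h : (Φ.ap g).domain = ⊤) :
    Dense ((Φ.ap g).domain : Set H) := by
  rw [h]
  simpa using dense_univ

/-- formal adjoint identity for bounded functions -/
theorem fa_bdd (φ : X → 𝕜) (hm : Measurable φ) (hb : ∃ C, ∀ x, ‖φ x‖ ≤ C)
    (x y : H) (hx : x ∈ (Φ.ap φ).domain)
    (hy : y ∈ (Φ.ap (fun t => (starRingEnd 𝕜) (φ t))).domain) :
    ⟪Φ.ap φ ⟨x, hx⟩, y⟫ = ⟪x, Φ.ap (fun t => (starRingEnd 𝕜) (φ t)) ⟨y, hy⟩⟫ := by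
  have hT : Dense ((Φ.ap φ).domain : Set H) :=
    dense_of_top Φ (Φ.mfc4_dom φ hm hb)
  have hstar := Φ.mfc4_star φ hm hb
  have hy' : y ∈ (Φ.ap φ).adjoint.domain := by rw [hstar]; exact hy
  have h1 := LinearPMap.adjoint_isFormalAdjoint hT ⟨y, hy'⟩ ⟨x, hx⟩
  have h2 : (Φ.ap φ).adjoint ⟨y, hy'⟩ =
      Φ.ap (fun t => (starRingEnd 𝕜) (φ t)) ⟨y, hy⟩ := pmap_congr hstar hy' hy
  rw [h2] at h1
  calc ⟪Φ.ap φ ⟨x, hx⟩, y⟫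
      = (starRingEnd 𝕜) ⟪y, Φ.ap φ ⟨x, hx⟩⟫ := (inner_conj_symm _ _).symm
    _ = (starRingEnd 𝕜) ⟪Φ.ap (fun t => (starRingEnd 𝕜) (φ t)) ⟨y, hy⟩, x⟫ := by rw [← h1]
    _ = ⟪x, Φ.ap (fun t => (starRingEnd 𝕜) (φ t)) ⟨y, hy⟩⟫ := inner_conj_symm _ _

/-- composing with a bounded function on the left -/
theorem M1 (φ g : X → 𝕜) (hφ : Measurable φ) (hφb : ∃ C, ∀ x, ‖φ x‖ ≤ C)
    (hg : Measurable g) {x : H} (hx : x ∈ (Φ.ap g).domain) :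
    ∃ (h2 : x ∈ (Φ.ap (φ * g)).domain) (h3 : Φ.ap g ⟨x, hx⟩ ∈ (Φ.ap φ).domain),
      Φ.ap (φ * g) ⟨x, h2⟩ = Φ.ap φ ⟨Φ.ap g ⟨x, hx⟩, h3⟩ := by
  have h3 : Φ.ap g ⟨x, hx⟩ ∈ (Φ.ap φ).domain := memTop Φ (Φ.mfc4_dom φ hφ hφb) _
  have hc : x ∈ ((Φ.ap φ).compP (Φ.ap g)).domain := compP_mem_domain hx h3
  have hc' : x ∈ (Φ.ap g).domain ⊓ (Φ.ap (φ * g)).domain := by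
    rw [← Φ.mfc3_dom φ g hφ hg]; exact hc
  have h2 : x ∈ (Φ.ap (φ * g)).domain := (Submodule.mem_inf.mp hc').2
  refine ⟨h2, h3, ?_⟩
  have hv := (Φ.mfc3_le φ g hφ hg).2 (x := ⟨x, hc⟩) (y := ⟨x, h2⟩) rfl
  rw [← hv, compP_apply hx h3 hc]

/-- composing with a bounded function on the right -/
theorem M2 (φ g : X → 𝕜) (hφ : Measurable φ) (hφb : ∃ C, ∀ x, ‖φ x‖ ≤ C)
    (hg : Measurable g) {x : H} (hx : x ∈ (Φ.ap (g * φ)).domain)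
    (hxφ : x ∈ (Φ.ap φ).domain) :
    ∃ h3 : Φ.ap φ ⟨x, hxφ⟩ ∈ (Φ.ap g).domain,
      Φ.ap (g * φ) ⟨x, hx⟩ = Φ.ap g ⟨Φ.ap φ ⟨x, hxφ⟩, h3⟩ := by
  have hc : x ∈ ((Φ.ap g).compP (Φ.ap φ)).domain := by
    rw [Φ.mfc3_dom g φ hg hφ]; exact Submodule.mem_inf.mpr ⟨hxφ, hx⟩
  obtain ⟨h1', h3'⟩ := compP_mem_domain' hc
  refine ⟨h3', ?_⟩
  have hv := (Φ.mfc3_le g φ hg hφ).2 (x := ⟨x, hc⟩) (y := ⟨x, hx⟩) rfl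
  rw [← hv, compP_apply hxφ h3' hc]

end Ops


section PF

open Filter

variable (Φ : MeasFC X 𝕜 H) (f : X → 𝕜) (hf : Measurable f)

include hf

theorem Pm (n : ℕ) (x : H) : x ∈ (Φ.ap (chi f n)).domain :=
  memTop Φ (Φ.mfc4_dom _ (chi_meas hf n) (chi_bdd f n)) x

/-- the truncation "projection" -/
def P (n : ℕ) (x : H) : H := Φ.ap (chi f n) ⟨x, Pm Φ f hf n x⟩

theorem Fm (n : ℕ) (x : H) : x ∈ (Φ.ap (f * chi f n)).domain :=
  memTop Φ (Φ.mfc4_dom _ (hf.mul (chi_meas hf n)) (fchi_bdd f n)) x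

/-- the truncated operator -/
def FF (n : ℕ) (x : H) : H := Φ.ap (f * chi f n) ⟨x, Fm Φ f hf n x⟩

theorem P_inner (n : ℕ) (x y : H) : ⟪P Φ f hf n x, y⟫ = ⟪x, P Φ f hf n y⟫ := by
  have hy : y ∈ (Φ.ap (fun t => (starRingEnd 𝕜) (chi f n t))).domain := by
    rw [conj_chi]; exact Pm Φ f hf n y
  have h := fa_bdd Φ (chi f n) (chi_meas hf n) (chi_bdd f n) x y (Pm Φ f hf n x) hy
  unfold P
  rw [h]
  exact congrArg (fun z => (inner 𝕜 x z : 𝕜)) (pmap_congr (congrArg Φ.ap (conj_chi f n)) hy (Pm Φ f hf n y))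

theorem P_P (n : ℕ) (x : H) : P Φ f hf n (P Φ f hf n x) = P Φ f hf n x := by
  obtain ⟨h2, h3, hv⟩ := M1 Φ (chi f n) (chi f n) (chi_meas hf n) (chi_bdd f n)
    (chi_meas hf n) (Pm Φ f hf n x)
  have h4 : Φ.ap (chi f n * chi f n) ⟨x, h2⟩ = Φ.ap (chi f n) ⟨x, Pm Φ f hf n x⟩ :=
    pmap_congr (congrArg Φ.ap (chi_mul_chi f n)) _ _
  have e1 : P Φ f hf n (P Φ f hf n x) = Φ.ap (chi f n * chi f n) ⟨x, h2⟩ := hv.symm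
  exact e1.trans h4

theorem FP (n : ℕ) (x : H) (hx : x ∈ (Φ.ap f).domain) :
    FF Φ f hf n x = P Φ f hf n (Φ.ap f ⟨x, hx⟩) := by
  obtain ⟨h2, h3, hv⟩ := M1 Φ (chi f n) f (chi_meas hf n) (chi_bdd f n) hf hx
  have h4 : FF Φ f hf n x = Φ.ap (chi f n * f) ⟨x, h2⟩ :=
    pmap_congr (congrArg Φ.ap (mul_comm f (chi f n))) _ _
  exact h4.trans hv

theorem PFdom (n : ℕ) (x : H) :
    ∃ h : P Φ f hf n x ∈ (Φ.ap f).domain,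
      Φ.ap f ⟨P Φ f hf n x, h⟩ = FF Φ f hf n x := by
  obtain ⟨h3, hv⟩ := M2 Φ (chi f n) f (chi_meas hf n) (chi_bdd f n) hf
    (Fm Φ f hf n x) (Pm Φ f hf n x)
  exact ⟨h3, hv.symm⟩

theorem P_tendsto (x : H) : Tendsto (fun n => P Φ f hf n x) atTop (𝓝 x) := by
  have hg : x ∈ (Φ.ap (fun _ : X => (1 : 𝕜))).domain := by
    rw [Φ.mfc1]; exact Submodule.mem_top
  have hap1 : Φ.ap (fun _ : X => (1 : 𝕜)) ⟨x, hg⟩ = x := by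
    have := pmap_congr (Φ.mfc1) hg (by rw [LinearMap.toPMap_domain]; exact Submodule.mem_top :
      x ∈ ((LinearMap.id : H →ₗ[𝕜] H).toPMap ⊤).domain)
    rw [this]
    rfl
  have hweak : ∀ y : H, Tendsto (fun n => ⟪P Φ f hf n x, y⟫) atTop (𝓝 ⟪x, y⟫) := by
    intro y
    have := Φ.mfc5 (fun n => chi f n) (fun _ => 1) (fun n => chi_meas hf n)
      measurable_const ⟨1, fun n x => chi_le_one f n x⟩ (chi_tendsto f) x y
      (fun n => Pm Φ f hf n x) hg
    rwa [hap1] at this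
  have hkey : ∀ n, ‖P Φ f hf n x - x‖ ^ 2 = ‖x‖ ^ 2 - RCLike.re ⟪P Φ f hf n x, x⟫ := by
    intro n
    set a := P Φ f hf n x with ha
    have key : ⟪a, a⟫ = ⟪x, a⟫ := by
      rw [ha, P_inner, P_P]
    have : ⟪a - x, a - x⟫ = ⟪x, x⟫ - ⟪a, x⟫ := by
      rw [inner_sub_sub_self, key]; ring
    rw [← inner_self_eq_norm_sq (𝕜 := 𝕜), this, ← inner_self_eq_norm_sq (𝕜 := 𝕜), _root_.map_sub]
  have hlim : Tendsto (fun n => ‖P Φ f hf n x - x‖ ^ 2) atTop (𝓝 0) := by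
    have h1 : Tendsto (fun n => RCLike.re ⟪P Φ f hf n x, x⟫) atTop
        (𝓝 (RCLike.re ⟪x, x⟫)) :=
      (RCLike.continuous_re.tendsto _).comp (hweak x)
    have h2 := (tendsto_const_nhds (x := ‖x‖ ^ 2) (f := atTop)).sub h1
    rw [← inner_self_eq_norm_sq (𝕜 := 𝕜), sub_self] at h2
    simpa [hkey, inner_self_eq_norm_sq (𝕜 := 𝕜)] using h2
  have hnorm : Tendsto (fun n => ‖P Φ f hf n x - x‖) atTop (𝓝 0) := by
    have h3 := (Real.continuous_sqrt.tendsto 0).comp hlim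
    simpa [Real.sqrt_sq (norm_nonneg _), Function.comp_def] using h3
  rw [tendsto_iff_norm_sub_tendsto_zero]
  exact hnorm

theorem F_tendsto (x : H) (hx : x ∈ (Φ.ap f).domain) :
    Tendsto (fun n => FF Φ f hf n x) atTop (𝓝 (Φ.ap f ⟨x, hx⟩)) := by
  have : (fun n => FF Φ f hf n x) = fun n => P Φ f hf n (Φ.ap f ⟨x, hx⟩) := by
    funext n; exact FP Φ f hf n x hx
  rw [this]
  exact P_tendsto Φ f hf _

theorem dom_dense : Dense ((Φ.ap f).domain : Set H) := by
  intro x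
  exact mem_closure_of_tendsto (P_tendsto Φ f hf x)
    (Filter.Eventually.of_forall fun n => (PFdom Φ f hf n x).elim fun h _ => h)

theorem closed_lim {x y : H} (h : Tendsto (fun n => FF Φ f hf n x) atTop (𝓝 y)) :
    ∃ hx : x ∈ (Φ.ap f).domain, Φ.ap f ⟨x, hx⟩ = y := by
  have hmem : ∀ n, (P Φ f hf n x, FF Φ f hf n x) ∈ ((Φ.ap f).graph : Set (H × H)) := by
    intro n
    obtain ⟨hm, hv⟩ := PFdom Φ f hf n x
    rw [← hv]
    exact (Φ.ap f).mem_graph ⟨_, hm⟩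
  have htend : Tendsto (fun n => (P Φ f hf n x, FF Φ f hf n x)) atTop (𝓝 (x, y)) :=
    (P_tendsto Φ f hf x).prodMk_nhds h
  have hcl : (x, y) ∈ (Φ.ap f).graph :=
    (Φ.isClosed f hf).mem_of_tendsto htend (Filter.Eventually.of_forall hmem)
  obtain ⟨u, hu1, hu2⟩ := (Φ.ap f).mem_graph_iff.mp hcl
  have hu1' : (u : H) = x := hu1
  have hu2' : Φ.ap f u = y := hu2
  have hx : x ∈ (Φ.ap f).domain := hu1' ▸ u.2
  exact ⟨hx, by rw [← hu2']; exact pmap_congr' hu1'.symm _ _⟩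

end PF


section Main

open Filter

theorem hconj_meas {φ : X → 𝕜} (hφ : Measurable φ) :
    Measurable fun t => (starRingEnd 𝕜) (φ t) :=
  (RCLike.continuous_conj.measurable).comp hφ

theorem bdd_conj {φ : X → 𝕜} (hφ : ∃ C, ∀ x, ‖φ x‖ ≤ C) :
    ∃ C, ∀ x, ‖(starRingEnd 𝕜) (φ x)‖ ≤ C := by
  obtain ⟨C, hC⟩ := hφ
  exact ⟨C, fun x => by simpa [RCLike.norm_conj] using hC x⟩

variable (Φ : MeasFC X 𝕜 H) (f : X → 𝕜) (hf : Measurable f)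

include hf

/-- Theorem (c): the adjoint of `Φ(f)` is `Φ(conj f)`. -/
theorem main_c : (Φ.ap f).adjoint = Φ.ap (fun x => (starRingEnd 𝕜) (f x)) := by
  have hcf : Measurable fun x => (starRingEnd 𝕜) (f x) := hconj_meas hf
  set cf : X → 𝕜 := fun x => (starRingEnd 𝕜) (f x) with hcfd
  have hT : Dense ((Φ.ap f).domain : Set H) := dom_dense Φ f hf
  have e : ∀ n, (fun t => (starRingEnd 𝕜) ((f * chi f n) t)) = cf * chi cf n := by
    intro n
    rw [conj_fchi, hcfd]
    rw [chi_conj]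
  have hy' : ∀ (n : ℕ) (y : H),
      y ∈ (Φ.ap (fun t => (starRingEnd 𝕜) ((f * chi f n) t))).domain := by
    intro n y
    rw [e]; exact Fm Φ cf hcf n y
  have hFFconj : ∀ (n : ℕ) (y : H),
      Φ.ap (fun t => (starRingEnd 𝕜) ((f * chi f n) t)) ⟨y, hy' n y⟩ = FF Φ cf hcf n y :=
    fun n y => pmap_congr (congrArg Φ.ap (e n)) _ _
  have h_fa : (Φ.ap f).IsFormalAdjoint (Φ.ap cf) := by
    rintro ⟨x, hx⟩ ⟨y, hy⟩
    have lim1 : Tendsto (fun n => ⟪FF Φ f hf n x, y⟫) atTop (𝓝 ⟪Φ.ap f ⟨x, hx⟩, y⟫) :=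
      (F_tendsto Φ f hf x hx).inner tendsto_const_nhds
    have lim2 : Tendsto (fun n => ⟪x, FF Φ cf hcf n y⟫) atTop (𝓝 ⟪x, Φ.ap cf ⟨y, hy⟩⟫) :=
      tendsto_const_nhds.inner (F_tendsto Φ cf hcf y hy)
    have heq : (fun n => ⟪FF Φ f hf n x, y⟫) = fun n => ⟪x, FF Φ cf hcf n y⟫ := by
      funext n
      have h := fa_bdd Φ (f * chi f n) (hf.mul (chi_meas hf n)) (fchi_bdd f n) x y
        (Fm Φ f hf n x) (hy' n y)
      unfold FF
      rw [h]
      exact congrArg (fun z => (⟪x, z⟫ : 𝕜)) (hFFconj n y)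
    rw [heq] at lim1
    exact tendsto_nhds_unique lim1 lim2
  have le1 : Φ.ap cf ≤ (Φ.ap f).adjoint := h_fa.le_adjoint hT
  have key : ∀ (y : H) (hy : y ∈ (Φ.ap f).adjoint.domain),
      ∃ hy2 : y ∈ (Φ.ap cf).domain,
        Φ.ap cf ⟨y, hy2⟩ = (Φ.ap f).adjoint ⟨y, hy⟩ := by
    intro y hy
    have hGP : ∀ n, FF Φ cf hcf n y = P Φ f hf n ((Φ.ap f).adjoint ⟨y, hy⟩) := by
      intro n
      apply ext_inner_left 𝕜
      intro v
      have h1 := fa_bdd Φ (f * chi f n) (hf.mul (chi_meas hf n)) (fchi_bdd f n) v y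
        (Fm Φ f hf n v) (hy' n y)
      obtain ⟨hm, hv⟩ := PFdom Φ f hf n v
      have h3 := LinearPMap.adjoint_isFormalAdjoint hT ⟨y, hy⟩ ⟨P Φ f hf n v, hm⟩
      calc ⟪v, FF Φ cf hcf n y⟫
          = ⟪v, Φ.ap (fun t => (starRingEnd 𝕜) ((f * chi f n) t)) ⟨y, hy' n y⟩⟫ := by
            rw [hFFconj n y]
        _ = ⟪FF Φ f hf n v, y⟫ := h1.symm
        _ = ⟪Φ.ap f ⟨P Φ f hf n v, hm⟩, y⟫ := by rw [hv]
        _ = (starRingEnd 𝕜) ⟪y, Φ.ap f ⟨P Φ f hf n v, hm⟩⟫ := (inner_conj_symm _ _).symm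
        _ = (starRingEnd 𝕜) ⟪(Φ.ap f).adjoint ⟨y, hy⟩, P Φ f hf n v⟫ := by rw [h3]
        _ = ⟪P Φ f hf n v, (Φ.ap f).adjoint ⟨y, hy⟩⟫ := inner_conj_symm _ _
        _ = ⟪v, P Φ f hf n ((Φ.ap f).adjoint ⟨y, hy⟩)⟫ := P_inner Φ f hf n v _
    have ht : Tendsto (fun n => FF Φ cf hcf n y) atTop (𝓝 ((Φ.ap f).adjoint ⟨y, hy⟩)) := by
      rw [show (fun n => FF Φ cf hcf n y)
          = fun n => P Φ f hf n ((Φ.ap f).adjoint ⟨y, hy⟩) from funext hGP]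
      exact P_tendsto Φ f hf _
    exact closed_lim Φ cf hcf ht
  have hdomeq : (Φ.ap f).adjoint.domain = (Φ.ap cf).domain :=
    le_antisymm (fun y hy => (key y hy).elim fun h _ => h) le1.1
  exact (LinearPMap.eq_of_le_of_domain_eq le1 hdomeq.symm).symm

/-- Theorem (d), second part: `Φ(conj f) Φ(f) = Φ(|f|²)`. -/
theorem main3 : (Φ.ap (fun x => (starRingEnd 𝕜) (f x))).compP (Φ.ap f) =
    Φ.ap (fun x => (starRingEnd 𝕜) (f x) * f x) := by
  have hcf : Measurable fun x => (starRingEnd 𝕜) (f x) := hconj_meas hf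
  set cf : X → 𝕜 := fun x => (starRingEnd 𝕜) (f x) with hcfd
  set g : X → 𝕜 := fun x => (starRingEnd 𝕜) (f x) * f x with hgd
  have hg : Measurable g := hcf.mul hf
  have hcff : cf * f = g := rfl
  have hdomle : (Φ.ap g).domain ≤ (Φ.ap f).domain := by
    intro x hx
    have s_mem : ∀ n, x ∈ (Φ.ap (g * chi f n)).domain := fun n =>
      memTop Φ (Φ.mfc4_dom _ (hg.mul (chi_meas hf n)) (gchi_bdd f n)) x
    have hs : ∀ n, Φ.ap (g * chi f n) ⟨x, s_mem n⟩ = P Φ f hf n (Φ.ap g ⟨x, hx⟩) := by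
      intro n
      obtain ⟨h2', h3', hv⟩ := M1 Φ (chi f n) g (chi_meas hf n) (chi_bdd f n) hg hx
      have e1 : Φ.ap (g * chi f n) ⟨x, s_mem n⟩ = Φ.ap (chi f n * g) ⟨x, h2'⟩ :=
        pmap_congr (congrArg Φ.ap (mul_comm g (chi f n))) _ _
      exact e1.trans hv
    have hinner : ∀ n m : ℕ,
        ∃ hmm : x ∈ (Φ.ap ((fun t => (starRingEnd 𝕜) ((f * chi f n) t))
            * (f * chi f m))).domain,
          ⟪FF Φ f hf n x, FF Φ f hf m x⟫ =
            ⟪x, Φ.ap ((fun t => (starRingEnd 𝕜) ((f * chi f n) t))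
              * (f * chi f m)) ⟨x, hmm⟩⟫ := by
      intro n m
      have hφm : Measurable fun t => (starRingEnd 𝕜) ((f * chi f n) t) :=
        hconj_meas (hf.mul (chi_meas hf n))
      have hφb := bdd_conj (fchi_bdd f n)
      obtain ⟨h2', h3', hv⟩ := M1 Φ (fun t => (starRingEnd 𝕜) ((f * chi f n) t))
        (f * chi f m) hφm hφb (hf.mul (chi_meas hf m)) (Fm Φ f hf m x)
      refine ⟨h2', ?_⟩
      have hy' : FF Φ f hf m x ∈
          (Φ.ap (fun t => (starRingEnd 𝕜) ((f * chi f n) t))).domain :=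
        memTop Φ (Φ.mfc4_dom _ hφm hφb) _
      have h1 := fa_bdd Φ (f * chi f n) (hf.mul (chi_meas hf n)) (fchi_bdd f n) x
        (FF Φ f hf m x) (Fm Φ f hf n x) hy'
      exact h1.trans (congrArg (fun z => (⟪x, z⟫ : 𝕜)) hv.symm)
    have hAB : ∀ m n : ℕ, m ≤ n →
        ⟪FF Φ f hf n x, FF Φ f hf m x⟫ = ⟪x, Φ.ap (g * chi f m) ⟨x, s_mem m⟩⟫ ∧
        ⟪FF Φ f hf m x, FF Φ f hf n x⟫ = ⟪x, Φ.ap (g * chi f m) ⟨x, s_mem m⟩⟫ := by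
      intro m n hmn
      obtain ⟨hmm1, hv1⟩ := hinner n m
      obtain ⟨hmm2, hv2⟩ := hinner m n
      constructor
      · rw [hv1]
        exact congrArg (fun z => (⟪x, z⟫ : 𝕜))
          (pmap_congr (congrArg Φ.ap (conj_fchi_mul f hmn)) _ _)
      · rw [hv2]
        exact congrArg (fun z => (⟪x, z⟫ : 𝕜))
          (pmap_congr (congrArg Φ.ap (conj_fchi_mul' f hmn)) _ _)
    set t : ℕ → ℝ := fun n => RCLike.re (⟪x, Φ.ap (g * chi f n) ⟨x, s_mem n⟩⟫ : 𝕜) with htd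
    have hdiff : ∀ m n : ℕ, m ≤ n → ‖FF Φ f hf n x - FF Φ f hf m x‖ ^ 2 = t n - t m := by
      intro m n hmn
      obtain ⟨hA, hB⟩ := hAB m n hmn
      obtain ⟨hC, -⟩ := hAB n n le_rfl
      have hexp : (⟪FF Φ f hf n x - FF Φ f hf m x, FF Φ f hf n x - FF Φ f hf m x⟫ : 𝕜)
          = ⟪x, Φ.ap (g * chi f n) ⟨x, s_mem n⟩⟫ - ⟪x, Φ.ap (g * chi f m) ⟨x, s_mem m⟩⟫ := by
        rw [inner_sub_sub_self, hA, hB, hC]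
        obtain ⟨hD, -⟩ := hAB m m le_rfl
        rw [hD]; ring
      rw [← inner_self_eq_norm_sq (𝕜 := 𝕜), hexp, _root_.map_sub]
    have hconv : Tendsto t atTop (𝓝 (RCLike.re (⟪x, Φ.ap g ⟨x, hx⟩⟫ : 𝕜))) := by
      have h1 : Tendsto (fun n => (⟪x, Φ.ap (g * chi f n) ⟨x, s_mem n⟩⟫ : 𝕜)) atTop
          (𝓝 ⟪x, Φ.ap g ⟨x, hx⟩⟫) := by
        have h2 : Tendsto (fun n => P Φ f hf n (Φ.ap g ⟨x, hx⟩)) atTop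
            (𝓝 (Φ.ap g ⟨x, hx⟩)) := P_tendsto Φ f hf _
        have h3 : Tendsto (fun n => (⟪x, P Φ f hf n (Φ.ap g ⟨x, hx⟩)⟫ : 𝕜)) atTop
            (𝓝 ⟪x, Φ.ap g ⟨x, hx⟩⟫) := Filter.Tendsto.inner tendsto_const_nhds h2
        simpa [hs] using h3
      exact (RCLike.continuous_re.tendsto _).comp h1
    have hcauchy : CauchySeq fun n => FF Φ f hf n x := by
      rw [Metric.cauchySeq_iff']
      intro ε hε
      obtain ⟨N, hN⟩ := Metric.cauchySeq_iff'.mp hconv.cauchySeq (ε ^ 2) (by positivity)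
      refine ⟨N, fun n hn => ?_⟩
      have h1 : ‖FF Φ f hf n x - FF Φ f hf N x‖ ^ 2 = t n - t N := hdiff N n hn
      have h2 : t n - t N ≤ |t n - t N| := le_abs_self _
      have h3 : |t n - t N| < ε ^ 2 := by
        have := hN n hn
        rwa [Real.dist_eq] at this
      have h4 : ‖FF Φ f hf n x - FF Φ f hf N x‖ ^ 2 < ε ^ 2 := by
        rw [h1]; exact lt_of_le_of_lt h2 h3
      rw [dist_eq_norm]
      exact lt_of_pow_lt_pow_left₀ 2 hε.le h4
    obtain ⟨y, hy⟩ := cauchySeq_tendsto_of_complete hcauchy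
    exact (closed_lim Φ f hf hy).elim fun h _ => h
  have h1 := Φ.mfc3_le cf f hcf hf
  rw [hcff] at h1
  have h2 := Φ.mfc3_dom cf f hcf hf
  rw [hcff] at h2
  have hdom : ((Φ.ap cf).compP (Φ.ap f)).domain = (Φ.ap g).domain := by
    rw [h2]; exact inf_eq_right.mpr hdomle
  exact LinearPMap.eq_of_le_of_domain_eq h1 hdom

end Main

end MFCAux

/-- Theorem 2.4 (c), (d): `Φ(f)* = Φ(conj f)`, `Φ(f)` is normal and
`Φ(conj f) Φ(f) = Φ(|f|²)`. -/
theorem mfc_adjoint_and_normal (Φ : MeasFC X 𝕜 H) (f : X → 𝕜) (hf : Measurable f) :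
    -- (c) the adjoint of Φ(f) is Φ(conj f)
    (Φ.ap f).adjoint = Φ.ap (fun x => starRingEnd 𝕜 (f x)) ∧
    -- (d) Φ(f) is normal: Φ(f)* Φ(f) = Φ(f) Φ(f)*
    ((Φ.ap f).adjoint.compP (Φ.ap f) = (Φ.ap f).compP (Φ.ap f).adjoint) ∧
    -- and Φ(conj f) Φ(f) = Φ(|f|²)
    (Φ.ap (fun x => starRingEnd 𝕜 (f x))).compP (Φ.ap f) =
      Φ.ap (fun x => starRingEnd 𝕜 (f x) * f x) := by
  have hcf : Measurable fun x => (starRingEnd 𝕜) (f x) := MFCAux.hconj_meas hf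
  have hc := MFCAux.main_c Φ f hf
  refine ⟨hc, ?_, MFCAux.main3 Φ f hf⟩
  rw [hc, MFCAux.main3 Φ f hf]
  have h2 := MFCAux.main3 Φ (fun x => (starRingEnd 𝕜) (f x)) hcf
  simp only [RCLike.conj_conj] at h2
  rw [h2]
  exact congrArg Φ.ap (funext fun x => mul_comm _ _)

end
end

section
/- Let Φ be a measurable functional calculus on (X, Σ) and let f, g : X → 𝕜 be measurable. Then: (a) ker(Φ(f)) = ker(Φ(1_{{f ≠ 0}})); (b) Φ(f) = 0 if and only if f = 0 Φ-almost everywhere; (c) Φ(f) = Φ(g) if and only if f = g Φ-almost everywhere; (d) Φ(f) is injective if and only if f ≠ 0 Φ-almost everywhere. -/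
open scoped Topology

noncomputable section

namespace LinearPMap

variable {R E : Type*} [Ring R] [AddCommGroup E] [Module R E]

theorem mem_compP_domain {S T : E →ₗ.[R] E} {x : E} :
    x ∈ (S.compP T).domain ↔ ∃ hx : x ∈ T.domain, T ⟨x, hx⟩ ∈ S.domain := by
  constructor
  · rintro ⟨y, hy, rfl⟩
    exact ⟨y.2, hy⟩
  · rintro ⟨hx, hSx⟩
    exact ⟨⟨x, hx⟩, hSx, rfl⟩

theorem apply_congr {S : E →ₗ.[R] E} {x y : E} (hx : x ∈ S.domain) (hy : y ∈ S.domain)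
    (h : x = y) : S ⟨x, hx⟩ = S ⟨y, hy⟩ := by subst h; rfl

theorem eq_apply_congr {S T : E →ₗ.[R] E} (h : S = T) {x : E} (hS : x ∈ S.domain)
    (hT : x ∈ T.domain) : S ⟨x, hS⟩ = T ⟨x, hT⟩ := by subst h; rfl

theorem le_apply' {S T : E →ₗ.[R] E} (h : S ≤ T) {x : E} (hx : x ∈ S.domain)
    (hx' : x ∈ T.domain) : S ⟨x, hx⟩ = T ⟨x, hx'⟩ := h.2 rfl

theorem compP_apply {S T : E →ₗ.[R] E} {x : E} (hx : x ∈ T.domain)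
    (hx2 : T ⟨x, hx⟩ ∈ S.domain) (hd : x ∈ (S.compP T).domain) :
    (S.compP T) ⟨x, hd⟩ = S ⟨T ⟨x, hx⟩, hx2⟩ := by
  show S.toFun _ = S.toFun _
  congr 1

end LinearPMap

namespace MeasFC

variable {𝕜 : Type*} [RCLike 𝕜] {X : Type*} [MeasurableSpace X]
  {H : Type*} [NormedAddCommGroup H] [InnerProductSpace 𝕜 H] [CompleteSpace H]
  (Φ : MeasFC X 𝕜 H)

theorem mem_dom (f : X → 𝕜) (hf : Measurable f) (hb : ∃ C, ∀ x, ‖f x‖ ≤ C) (x : H) :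
    x ∈ (Φ.ap f).domain := by rw [Φ.mfc4_dom f hf hb]; exact Submodule.mem_top

theorem one_apply (x : H) (hx : x ∈ (Φ.ap (fun _ : X => (1:𝕜))).domain) :
    Φ.ap (fun _ => (1:𝕜)) ⟨x, hx⟩ = x := by
  rw [LinearPMap.eq_apply_congr Φ.mfc1 hx Submodule.mem_top]
  rfl

/-- An operator equals the zero pmap iff it kills every vector (with full domain). -/
theorem eq_zero_pmap_iff (f : X → 𝕜) :
    Φ.ap f = (0 : H →ₗ[𝕜] H).toPMap ⊤ ↔
      ∀ x : H, ∃ hx : x ∈ (Φ.ap f).domain, Φ.ap f ⟨x, hx⟩ = 0 := by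
  constructor
  · intro h x
    have hx : x ∈ (Φ.ap f).domain := by rw [h]; exact Submodule.mem_top
    refine ⟨hx, ?_⟩
    rw [LinearPMap.eq_apply_congr h hx Submodule.mem_top]
    rfl
  · intro h
    have hdom : (Φ.ap f).domain = ⊤ := by
      rw [Submodule.eq_top_iff']
      exact fun x => (h x).1
    refine LinearPMap.ext (by rw [hdom]; rfl) ?_
    intro x hx hy
    exact (h x).2

/-- Lemma 3.1 (a) : `ker Φ(f) = ker Φ(1_{f ≠ 0})`. -/
theorem kerSet_eq (f : X → 𝕜) (hf : Measurable f) :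
    {x : H | ∃ hx : x ∈ (Φ.ap f).domain, Φ.ap f ⟨x, hx⟩ = 0} =
      {x : H | ∃ hx : x ∈ (Φ.ap ({y | f y ≠ 0}.indicator fun _ => 1)).domain,
        Φ.ap ({y | f y ≠ 0}.indicator fun _ => 1) ⟨x, hx⟩ = 0} := by
  have hSm : MeasurableSet {y | f y ≠ 0} := (hf (measurableSet_singleton 0)).compl
  set e : X → 𝕜 := {y | f y ≠ 0}.indicator (fun _ => 1) with hedef
  have he : Measurable e := measurable_const.indicator hSm
  have heb : ∃ C, ∀ x, ‖e x‖ ≤ C := by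
    refine ⟨1, fun x => ?_⟩
    rw [hedef]
    by_cases h : x ∈ {y | f y ≠ 0} <;> simp [Set.indicator_apply, h]
  have hfe : f * e = f := by
    funext y
    by_cases h : f y = 0
    · simp [Pi.mul_apply, h]
    · rw [Pi.mul_apply, hedef, Set.indicator_of_mem (show y ∈ {y | f y ≠ 0} from h),
        mul_one]
  ext x
  constructor
  · -- hard direction, via the truncated-inverse approximation
    rintro ⟨hx, hval⟩
    have hxe : x ∈ (Φ.ap e).domain := Φ.mem_dom e he heb x
    refine ⟨hxe, ?_⟩
    set p : ℕ → X → 𝕜 := fun n y => if ((n : ℝ) + 1)⁻¹ ≤ ‖f y‖ then (f y)⁻¹ else 0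
      with hpdef
    have hpm : ∀ n, Measurable (p n) := by
      intro n
      simp only [hpdef]
      exact Measurable.ite (measurableSet_le measurable_const hf.norm) hf.inv
        measurable_const
    have hpb : ∀ n, ∃ C, ∀ y, ‖p n y‖ ≤ C := by
      intro n
      refine ⟨(n : ℝ) + 1, fun y => ?_⟩
      simp only [hpdef]
      by_cases h : ((n : ℝ) + 1)⁻¹ ≤ ‖f y‖
      · rw [if_pos h, norm_inv]
        calc ‖f y‖⁻¹ ≤ (((n : ℝ) + 1)⁻¹)⁻¹ := by gcongr
          _ = (n : ℝ) + 1 := inv_inv _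
      · rw [if_neg h, norm_zero]
        positivity
    have hq : ∀ n y, (p n * f) y = if ((n : ℝ) + 1)⁻¹ ≤ ‖f y‖ then (1:𝕜) else 0 := by
      intro n y
      simp only [Pi.mul_apply, hpdef]
      by_cases h : ((n : ℝ) + 1)⁻¹ ≤ ‖f y‖
      · rw [if_pos h, if_pos h]
        refine inv_mul_cancel₀ (fun h0 => ?_)
        rw [h0, norm_zero] at h
        exact absurd h (not_le.mpr (by positivity))
      · rw [if_neg h, if_neg h, zero_mul]
    have hqm : ∀ n, Measurable (p n * f) := fun n => (hpm n).mul hf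
    have hqb : ∃ C, ∀ n y, ‖(p n * f) y‖ ≤ C := by
      refine ⟨1, fun n y => ?_⟩
      rw [hq n y]
      by_cases h : ((n : ℝ) + 1)⁻¹ ≤ ‖f y‖
      · rw [if_pos h, norm_one]
      · rw [if_neg h, norm_zero]; exact zero_le_one
    have hqt : ∀ y, Filter.Tendsto (fun n => (p n * f) y) Filter.atTop (𝓝 (e y)) := by
      intro y
      rcases eq_or_ne (f y) 0 with h | h
      · have h0 : ∀ n : ℕ, (p n * f) y = e y := by
          intro n
          rw [hq n y, if_neg (by rw [h, norm_zero]; exact not_le.mpr (by positivity)),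
            hedef, Set.indicator_of_notMem (by simp [h])]
        simp only [h0]
        exact tendsto_const_nhds
      · have hee : e y = 1 := by
          rw [hedef]; exact Set.indicator_of_mem (show y ∈ {y | f y ≠ 0} from h) _
        rw [hee]
        obtain ⟨N, hN⟩ := exists_nat_ge (‖f y‖)⁻¹
        refine Filter.Tendsto.congr' ?_ tendsto_const_nhds
        filter_upwards [Filter.eventually_ge_atTop N] with n hn
        have hfpos : (0:ℝ) < ‖f y‖ := norm_pos_iff.mpr h
        have h1 : (‖f y‖)⁻¹ ≤ (n : ℝ) + 1 := by
          refine hN.trans ?_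
          have h2 : (N : ℝ) ≤ n := Nat.cast_le.mpr hn
          linarith
        have h2 : ((n : ℝ) + 1)⁻¹ ≤ ‖f y‖ := by
          calc ((n : ℝ) + 1)⁻¹ ≤ ((‖f y‖)⁻¹)⁻¹ := by gcongr
            _ = ‖f y‖ := inv_inv _
        rw [hq n y, if_pos h2]
    have hdomn : ∀ n, x ∈ (Φ.ap (p n * f)).domain := by
      intro n
      have hmem : x ∈ ((Φ.ap (p n)).compP (Φ.ap f)).domain :=
        LinearPMap.mem_compP_domain.mpr ⟨hx, Φ.mem_dom (p n) (hpm n) (hpb n) _⟩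
      rw [Φ.mfc3_dom (p n) f (hpm n) hf] at hmem
      exact (Submodule.mem_inf.mp hmem).2
    have hvaln : ∀ n, Φ.ap (p n * f) ⟨x, hdomn n⟩ = 0 := by
      intro n
      have hmem : x ∈ ((Φ.ap (p n)).compP (Φ.ap f)).domain :=
        LinearPMap.mem_compP_domain.mpr ⟨hx, Φ.mem_dom (p n) (hpm n) (hpb n) _⟩
      rw [← LinearPMap.le_apply' (Φ.mfc3_le (p n) f (hpm n) hf) hmem (hdomn n),
        LinearPMap.compP_apply hx (Φ.mem_dom (p n) (hpm n) (hpb n) _) hmem,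
        LinearPMap.apply_congr _ ((Φ.ap (p n)).domain.zero_mem) hval]
      exact (Φ.ap (p n)).map_zero
    have htend := Φ.mfc5 (fun n => p n * f) e hqm he hqb hqt x (Φ.ap e ⟨x, hxe⟩)
      hdomn hxe
    simp only [hvaln, inner_zero_left] at htend
    exact inner_self_eq_zero.mp (tendsto_nhds_unique htend tendsto_const_nhds)
  · -- easy direction
    rintro ⟨hx, hval⟩
    have hmem : x ∈ ((Φ.ap f).compP (Φ.ap e)).domain :=
      LinearPMap.mem_compP_domain.mpr ⟨hx, by rw [hval]; exact (Φ.ap f).domain.zero_mem⟩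
    have hmem2 : x ∈ (Φ.ap (f * e)).domain := by
      have := hmem
      rw [Φ.mfc3_dom f e hf he] at this
      exact (Submodule.mem_inf.mp this).2
    have hmemf : x ∈ (Φ.ap f).domain := by rw [← hfe]; exact hmem2
    refine ⟨hmemf, ?_⟩
    rw [LinearPMap.eq_apply_congr (congrArg Φ.ap hfe).symm hmemf hmem2,
      ← LinearPMap.le_apply' (Φ.mfc3_le f e hf he) hmem hmem2,
      LinearPMap.compP_apply hx (by rw [hval]; exact (Φ.ap f).domain.zero_mem) hmem,
      LinearPMap.apply_congr _ ((Φ.ap f).domain.zero_mem) hval]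
    exact (Φ.ap f).map_zero

/-- Lemma 3.1 (b). -/
theorem ap_eq_zero_iff (f : X → 𝕜) (hf : Measurable f) :
    Φ.ap f = (0 : H →ₗ[𝕜] H).toPMap ⊤ ↔ Φ.IsNull {x | f x ≠ 0} := by
  have hker := Set.ext_iff.mp (Φ.kerSet_eq f hf)
  unfold MeasFC.IsNull
  rw [Φ.eq_zero_pmap_iff f, Φ.eq_zero_pmap_iff _]
  exact forall_congr' fun x => hker x

/-- Lemma 3.1 (c). -/
theorem ap_eq_iff (f g : X → 𝕜) (hf : Measurable f) (hg : Measurable g) :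
    Φ.ap f = Φ.ap g ↔ Φ.IsNull {x | f x ≠ g x} := by
  constructor
  · intro hfg
    set r : X → 𝕜 := fun y => ((1 + ‖f y‖ + ‖g y‖ : ℝ) : 𝕜)⁻¹ with hrdef
    have hrm : Measurable r := by
      simp only [hrdef]
      exact (RCLike.measurable_ofReal.comp
        ((measurable_const.add hf.norm).add hg.norm)).inv
    have hpos : ∀ y, (0:ℝ) < 1 + ‖f y‖ + ‖g y‖ := fun y => by positivity
    have hrne : ∀ y, r y ≠ 0 := by
      intro y
      rw [hrdef]
      refine inv_ne_zero ?_
      rw [Ne, RCLike.ofReal_eq_zero]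
      exact (hpos y).ne'
    have hrnorm : ∀ y, ‖r y‖ = (1 + ‖f y‖ + ‖g y‖)⁻¹ := by
      intro y
      rw [hrdef]
      rw [norm_inv, RCLike.norm_ofReal, abs_of_pos (hpos y)]
    have hrb : ∃ C, ∀ y, ‖r y‖ ≤ C := by
      refine ⟨1, fun y => ?_⟩
      rw [hrnorm y]
      calc (1 + ‖f y‖ + ‖g y‖)⁻¹ ≤ (1:ℝ)⁻¹ := by
            gcongr
            have h1 := norm_nonneg (f y); have h2 := norm_nonneg (g y); linarith
        _ = 1 := inv_one
    have hmul_le : ∀ (u : X → 𝕜), (∀ y, ‖u y‖ ≤ 1 + ‖f y‖ + ‖g y‖) →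
        ∀ y, ‖u y * r y‖ ≤ 1 := by
      intro u hu y
      rw [norm_mul, hrnorm y]
      calc ‖u y‖ * (1 + ‖f y‖ + ‖g y‖)⁻¹
          ≤ (1 + ‖f y‖ + ‖g y‖) * (1 + ‖f y‖ + ‖g y‖)⁻¹ := by
            gcongr
            exact hu y
        _ = 1 := mul_inv_cancel₀ (hpos y).ne'
    have hfrm : Measurable (f * r) := hf.mul hrm
    have hgrm : Measurable (g * r) := hg.mul hrm
    have hfr1 : ∀ y, ‖(f * r) y‖ ≤ 1 := fun y =>
      hmul_le f (fun z => by have := norm_nonneg (g z); linarith) y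
    have hgr1 : ∀ y, ‖(g * r) y‖ ≤ 1 := fun y =>
      hmul_le g (fun z => by have := norm_nonneg (f z); linarith) y
    have hfrb : ∃ C, ∀ y, ‖(f * r) y‖ ≤ C := ⟨1, hfr1⟩
    have hgrb : ∃ C, ∀ y, ‖(g * r) y‖ ≤ C := ⟨1, hgr1⟩
    have hxr : ∀ x : H, x ∈ (Φ.ap r).domain := Φ.mem_dom r hrm hrb
    have key : ∀ (u : X → 𝕜), Measurable u → ∀ (x : H)
        (hd : x ∈ (Φ.ap (u * r)).domain),
        ∃ hm : Φ.ap r ⟨x, hxr x⟩ ∈ (Φ.ap u).domain,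
          Φ.ap (u * r) ⟨x, hd⟩ = Φ.ap u ⟨Φ.ap r ⟨x, hxr x⟩, hm⟩ := by
      intro u hu x hd
      have hmem : x ∈ ((Φ.ap u).compP (Φ.ap r)).domain := by
        rw [Φ.mfc3_dom u r hu hrm]
        exact Submodule.mem_inf.mpr ⟨hxr x, hd⟩
      obtain ⟨hx1, hx2⟩ := LinearPMap.mem_compP_domain.mp hmem
      refine ⟨hx2, ?_⟩
      rw [← LinearPMap.le_apply' (Φ.mfc3_le u r hu hrm) hmem hd]
      exact LinearPMap.compP_apply (hxr x) hx2 hmem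
    have hABeq : ∀ (x : H) (hA : x ∈ (Φ.ap (f * r)).domain)
        (hB : x ∈ (Φ.ap (g * r)).domain),
        Φ.ap (f * r) ⟨x, hA⟩ = Φ.ap (g * r) ⟨x, hB⟩ := by
      intro x hA hB
      obtain ⟨hmf, hvf⟩ := key f hf x hA
      obtain ⟨hmg, hvg⟩ := key g hg x hB
      rw [hvf, hvg]
      exact LinearPMap.eq_apply_congr hfg hmf hmg
    set ngr : X → 𝕜 := fun y => (-1 : 𝕜) * (g * r) y with hngrdef
    have hngrm : Measurable ngr := by
      simp only [hngrdef]
      exact measurable_const.mul hgrm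
    have hngrb : ∃ C, ∀ y, ‖ngr y‖ ≤ C := by
      refine ⟨1, fun y => ?_⟩
      simp only [hngrdef, norm_mul, norm_neg, norm_one, one_mul]
      exact hgr1 y
    have hsmul := Φ.mfc2_smul (-1) (g * r) hgrm
    have hnval : ∀ (x : H) (hn : x ∈ (Φ.ap ngr).domain)
        (hB : x ∈ (Φ.ap (g * r)).domain),
        Φ.ap ngr ⟨x, hn⟩ = - Φ.ap (g * r) ⟨x, hB⟩ := by
      intro x hn hB
      have hmem : x ∈ ((-1 : 𝕜) • Φ.ap (g * r)).domain := by
        rw [LinearPMap.smul_domain]; exact hB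
      rw [← LinearPMap.le_apply' hsmul hmem hn, LinearPMap.smul_apply, neg_one_smul]
    have hadd := Φ.mfc2_add (f * r) ngr hfrm hngrm
    set w : X → 𝕜 := fun y => (f y - g y) * r y with hwdef
    have hsum_eq : f * r + ngr = w := by
      funext y
      simp only [Pi.add_apply, Pi.mul_apply, hngrdef, hwdef]
      ring
    have hwm : Measurable w := by
      simp only [hwdef]
      exact (hf.sub hg).mul hrm
    have hwb : ∃ C, ∀ y, ‖w y‖ ≤ C := by
      refine ⟨1, fun y => ?_⟩
      simp only [hwdef]
      refine hmul_le (fun z => f z - g z) (fun z => ?_) y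
      have h1 := norm_sub_le (f z) (g z)
      linarith
    have hzero : ∀ x : H, ∃ hx : x ∈ (Φ.ap w).domain, Φ.ap w ⟨x, hx⟩ = 0 := by
      intro x
      have hxh : x ∈ (Φ.ap w).domain := Φ.mem_dom w hwm hwb x
      refine ⟨hxh, ?_⟩
      have hxA : x ∈ (Φ.ap (f * r)).domain := Φ.mem_dom _ hfrm hfrb x
      have hxN : x ∈ (Φ.ap ngr).domain := Φ.mem_dom _ hngrm hngrb x
      have hxB : x ∈ (Φ.ap (g * r)).domain := Φ.mem_dom _ hgrm hgrb x
      have hmem : x ∈ (Φ.ap (f * r) + Φ.ap ngr).domain := by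
        rw [LinearPMap.add_domain]; exact Submodule.mem_inf.mpr ⟨hxA, hxN⟩
      have h1 : x ∈ (Φ.ap (f * r + ngr)).domain := by rw [hsum_eq]; exact hxh
      rw [LinearPMap.eq_apply_congr (congrArg Φ.ap hsum_eq).symm hxh h1,
        ← LinearPMap.le_apply' hadd hmem h1, LinearPMap.add_apply,
        hnval x _ hxB, hABeq x _ hxB]
      exact add_neg_cancel _
    have hW0 : Φ.ap w = (0 : H →ₗ[𝕜] H).toPMap ⊤ := (Φ.eq_zero_pmap_iff w).mpr hzero
    have hNull := (Φ.ap_eq_zero_iff w hwm).mp hW0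
    have hset : {x | w x ≠ 0} = {x | f x ≠ g x} := by
      ext y
      simp only [Set.mem_setOf_eq, hwdef]
      rw [mul_ne_zero_iff]
      constructor
      · rintro ⟨h1, -⟩; exact sub_ne_zero.mp h1
      · intro h1; exact ⟨sub_ne_zero.mpr h1, hrne y⟩
    rwa [hset] at hNull
  · intro hN
    have hBm : MeasurableSet {x | f x ≠ g x} := by
      have h1 : {x | f x ≠ g x} = (fun x => f x - g x) ⁻¹' ({0}ᶜ) := by
        ext y
        simp [sub_eq_zero]
      rw [h1]
      exact (hf.sub hg) (measurableSet_singleton 0).compl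
    set b : X → 𝕜 := {x | f x ≠ g x}.indicator (fun _ => 1) with hbdef
    set e : X → 𝕜 := {x | f x ≠ g x}ᶜ.indicator (fun _ => 1) with hedef
    have hbm : Measurable b := measurable_const.indicator hBm
    have hem : Measurable e := measurable_const.indicator hBm.compl
    have hbb : ∃ C, ∀ y, ‖b y‖ ≤ C := by
      refine ⟨1, fun y => ?_⟩
      rw [hbdef]
      by_cases hy : y ∈ {x | f x ≠ g x} <;> simp [Set.indicator_apply, hy]
    have heb : ∃ C, ∀ y, ‖e y‖ ≤ C := by
      refine ⟨1, fun y => ?_⟩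
      rw [hedef]
      by_cases hy : y ∈ {x | f x ≠ g x}ᶜ <;> simp [Set.indicator_apply, hy]
    have hsum : b + e = fun _ => (1:𝕜) := by
      funext y
      by_cases hy : f y ≠ g y
      · simp [Pi.add_apply, hbdef, hedef, Set.indicator_apply, Set.mem_compl_iff,
          Set.mem_setOf_eq, hy]
      · simp [Pi.add_apply, hbdef, hedef, Set.indicator_apply, Set.mem_compl_iff,
          Set.mem_setOf_eq, hy]
    have heI : ∀ (x : H) (hx : x ∈ (Φ.ap e).domain), Φ.ap e ⟨x, hx⟩ = x := by
      intro x hx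
      have hadd := Φ.mfc2_add b e hbm hem
      have hxb : x ∈ (Φ.ap b).domain := Φ.mem_dom b hbm hbb x
      have hmem : x ∈ (Φ.ap b + Φ.ap e).domain := by
        rw [LinearPMap.add_domain]; exact Submodule.mem_inf.mpr ⟨hxb, hx⟩
      have h1 : x ∈ (Φ.ap (b + e)).domain := hadd.1 hmem
      have h2 : x ∈ (Φ.ap (fun _ : X => (1:𝕜))).domain := by
        rw [← hsum]; exact h1
      have hIval : Φ.ap (b + e) ⟨x, h1⟩ = x := by
        rw [LinearPMap.eq_apply_congr (congrArg Φ.ap hsum) h1 h2]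
        exact Φ.one_apply x h2
      have hbval : Φ.ap b ⟨x, hxb⟩ = 0 := by
        obtain ⟨hdisc, hv⟩ := (Φ.eq_zero_pmap_iff b).mp hN x
        exact hv
      have h3 := LinearPMap.le_apply' hadd hmem h1
      rw [LinearPMap.add_apply, hIval] at h3
      have h4 : Φ.ap b ⟨x, hxb⟩ + Φ.ap e ⟨x, hx⟩ = x := h3
      rwa [hbval, zero_add] at h4
    have hxe : ∀ x : H, x ∈ (Φ.ap e).domain := Φ.mem_dom e hem heb
    have hmul : ∀ (u : X → 𝕜), Measurable u → Φ.ap (u * e) = Φ.ap u := by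
      intro u hu
      have hcd := Φ.mfc3_dom u e hu hem
      have hcl := Φ.mfc3_le u e hu hem
      have hdomiff : ∀ x : H, x ∈ (Φ.ap (u * e)).domain ↔ x ∈ (Φ.ap u).domain := by
        intro x
        constructor
        · intro hx
          have hmem : x ∈ ((Φ.ap u).compP (Φ.ap e)).domain := by
            rw [hcd]; exact Submodule.mem_inf.mpr ⟨hxe x, hx⟩
          obtain ⟨h1, h2⟩ := LinearPMap.mem_compP_domain.mp hmem
          rwa [heI x h1] at h2
        · intro hx
          have hmem : x ∈ ((Φ.ap u).compP (Φ.ap e)).domain :=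
            LinearPMap.mem_compP_domain.mpr ⟨hxe x, by rw [heI x (hxe x)]; exact hx⟩
          rw [hcd] at hmem
          exact (Submodule.mem_inf.mp hmem).2
      refine LinearPMap.ext (Submodule.ext hdomiff) ?_
      intro x hx hy
      have hmem : x ∈ ((Φ.ap u).compP (Φ.ap e)).domain := by
        rw [hcd]; exact Submodule.mem_inf.mpr ⟨hxe x, hx⟩
      have h2 : Φ.ap e ⟨x, hxe x⟩ ∈ (Φ.ap u).domain := by
        rw [heI x (hxe x)]; exact hy
      rw [← LinearPMap.le_apply' hcl hmem hx,
        LinearPMap.compP_apply (hxe x) h2 hmem]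
      exact LinearPMap.apply_congr h2 hy (heI x (hxe x))
    have hue : f * e = g * e := by
      funext y
      by_cases hy : f y = g y
      · simp [Pi.mul_apply, hy]
      · have h0 : e y = 0 := by
          rw [hedef]
          exact Set.indicator_of_notMem (by simp [hy]) _
        simp [Pi.mul_apply, h0]
    calc Φ.ap f = Φ.ap (f * e) := (hmul f hf).symm
      _ = Φ.ap (g * e) := by rw [hue]
      _ = Φ.ap g := hmul g hg

/-- Lemma 3.1 (d). -/
theorem injective_iff (f : X → 𝕜) (hf : Measurable f) :
    (Function.Injective fun x : (Φ.ap f).domain => Φ.ap f x) ↔ Φ.IsNull {x | f x = 0} := by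
  have hSm : MeasurableSet {y | f y ≠ 0} := (hf (measurableSet_singleton 0)).compl
  set s : X → 𝕜 := {y | f y ≠ 0}.indicator (fun _ => 1) with hsdef
  set q : X → 𝕜 := {x | f x = 0}.indicator (fun _ => 1) with hqdef
  have hsm : Measurable s := measurable_const.indicator hSm
  have hqm : Measurable q := by
    refine measurable_const.indicator ?_
    have h1 : {x | f x = 0} = {y | f y ≠ 0}ᶜ := by
      ext y; simp [Set.mem_compl_iff]
    rw [h1]
    exact hSm.compl
  have hsb : ∃ C, ∀ y, ‖s y‖ ≤ C := by
    refine ⟨1, fun y => ?_⟩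
    rw [hsdef]
    by_cases hy : y ∈ {y | f y ≠ 0} <;> simp [Set.indicator_apply, hy]
  have hqb : ∃ C, ∀ y, ‖q y‖ ≤ C := by
    refine ⟨1, fun y => ?_⟩
    rw [hqdef]
    by_cases hy : y ∈ {x | f x = 0} <;> simp [Set.indicator_apply, hy]
  have hker := Φ.kerSet_eq f hf
  have hsum : s + q = fun _ => (1:𝕜) := by
    funext y
    by_cases hy : f y = 0 <;>
      simp [Pi.add_apply, hsdef, hqdef, Set.indicator_apply, Set.mem_setOf_eq, hy]
  have hprod : s * q = fun _ : X => (0:𝕜) := by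
    funext y
    by_cases hy : f y = 0 <;>
      simp [Pi.mul_apply, hsdef, hqdef, Set.indicator_apply, Set.mem_setOf_eq, hy]
  have hzero : ∀ (x : H) (hx : x ∈ (Φ.ap (fun _ : X => (0:𝕜))).domain),
      Φ.ap (fun _ => (0:𝕜)) ⟨x, hx⟩ = 0 := by
    intro x hx
    have hsmul := Φ.mfc2_smul 0 (fun _ => (1:𝕜)) measurable_const
    have h01 : (fun x : X => (0:𝕜) * (fun _ : X => (1:𝕜)) x) = fun _ : X => (0:𝕜) := by
      funext y; simp
    rw [h01] at hsmul
    have hx1 : x ∈ ((0:𝕜) • Φ.ap (fun _ : X => (1:𝕜))).domain := by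
      rw [LinearPMap.smul_domain]
      exact Φ.mem_dom _ measurable_const ⟨1, fun y => by simp⟩ x
    rw [← LinearPMap.le_apply' hsmul hx1 hx, LinearPMap.smul_apply, zero_smul]
  have hx_s : ∀ x : H, x ∈ (Φ.ap s).domain := Φ.mem_dom s hsm hsb
  have hx_q : ∀ x : H, x ∈ (Φ.ap q).domain := Φ.mem_dom q hqm hqb
  have hPQ : ∀ x : H, Φ.ap s ⟨x, hx_s x⟩ + Φ.ap q ⟨x, hx_q x⟩ = x := by
    intro x
    have hadd := Φ.mfc2_add s q hsm hqm
    have hmem : x ∈ (Φ.ap s + Φ.ap q).domain := by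
      rw [LinearPMap.add_domain]; exact Submodule.mem_inf.mpr ⟨hx_s x, hx_q x⟩
    have h1 : x ∈ (Φ.ap (s + q)).domain := hadd.1 hmem
    have h2 : x ∈ (Φ.ap (fun _ : X => (1:𝕜))).domain := by rw [← hsum]; exact h1
    have h3 := LinearPMap.le_apply' hadd hmem h1
    rw [LinearPMap.add_apply,
      LinearPMap.eq_apply_congr (congrArg Φ.ap hsum) h1 h2, Φ.one_apply x h2] at h3
    exact h3
  have hP0 : ∀ x : H, Φ.ap s ⟨Φ.ap q ⟨x, hx_q x⟩, hx_s _⟩ = 0 := by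
    intro x
    have hcl := Φ.mfc3_le s q hsm hqm
    have hcd := Φ.mfc3_dom s q hsm hqm
    have hmem : x ∈ ((Φ.ap s).compP (Φ.ap q)).domain :=
      LinearPMap.mem_compP_domain.mpr ⟨hx_q x, hx_s _⟩
    have h1 : x ∈ (Φ.ap (s * q)).domain := by
      have := hmem
      rw [hcd] at this
      exact (Submodule.mem_inf.mp this).2
    have h2 : x ∈ (Φ.ap (fun _ : X => (0:𝕜))).domain := by rw [← hprod]; exact h1
    have h3 := (LinearPMap.le_apply' hcl hmem h1).symm
    rw [LinearPMap.compP_apply (hx_q x) (hx_s _) hmem] at h3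
    rw [← h3, LinearPMap.eq_apply_congr (congrArg Φ.ap hprod) h1 h2]
    exact hzero x h2
  constructor
  · intro hinj
    show Φ.ap q = (0 : H →ₗ[𝕜] H).toPMap ⊤
    refine (Φ.eq_zero_pmap_iff q).mpr fun x => ⟨hx_q x, ?_⟩
    have hvker : Φ.ap q ⟨x, hx_q x⟩ ∈
        {z : H | ∃ hz : z ∈ (Φ.ap s).domain, Φ.ap s ⟨z, hz⟩ = 0} := ⟨hx_s _, hP0 x⟩
    rw [← hker] at hvker
    obtain ⟨hvf, hvval⟩ := hvker
    have hz : (⟨Φ.ap q ⟨x, hx_q x⟩, hvf⟩ : (Φ.ap f).domain) = 0 := by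
      apply hinj
      show Φ.ap f _ = Φ.ap f 0
      rw [hvval, (Φ.ap f).map_zero]
    exact congrArg Subtype.val hz
  · intro hq0
    have hq0' : ∀ x : H, Φ.ap q ⟨x, hx_q x⟩ = 0 := by
      intro x
      obtain ⟨hdisc, hv⟩ := (Φ.eq_zero_pmap_iff q).mp hq0 x
      exact hv
    have hPx : ∀ x : H, Φ.ap s ⟨x, hx_s x⟩ = x := by
      intro x
      have h1 := hPQ x
      rwa [hq0' x, add_zero] at h1
    intro a c hac
    have hac' : Φ.ap f a = Φ.ap f c := hac
    have hsub : Φ.ap f (a - c) = 0 := by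
      rw [(Φ.ap f).map_sub, hac', sub_self]
    have hker' : ((a - c : (Φ.ap f).domain) : H) ∈
        {z : H | ∃ hz : z ∈ (Φ.ap f).domain, Φ.ap f ⟨z, hz⟩ = 0} := ⟨(a - c).2, hsub⟩
    rw [hker] at hker'
    obtain ⟨hm, hv⟩ := hker'
    have h0 : a - c = 0 := Subtype.ext ((hPx ((a - c : (Φ.ap f).domain) : H)).symm.trans hv)
    exact sub_eq_zero.mp h0

end MeasFC

variable {𝕜 : Type*} [RCLike 𝕜] {X : Type*} [MeasurableSpace X]
  {H : Type*} [NormedAddCommGroup H] [InnerProductSpace 𝕜 H] [CompleteSpace H]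

/-- Lemma 3.1: kernels and `Φ`-null sets. -/
theorem mfc_null_sets (Φ : MeasFC X 𝕜 H) (f g : X → 𝕜)
    (hf : Measurable f) (hg : Measurable g) :
    -- (a) ker Φ(f) = ker Φ(1_{f ≠ 0})
    ({x : H | ∃ hx : x ∈ (Φ.ap f).domain, Φ.ap f ⟨x, hx⟩ = 0} =
      {x : H | ∃ hx : x ∈ (Φ.ap ({y | f y ≠ 0}.indicator fun _ => 1)).domain,
        Φ.ap ({y | f y ≠ 0}.indicator fun _ => 1) ⟨x, hx⟩ = 0}) ∧
    -- (b) Φ(f) = 0 iff f = 0 Φ-almost everywhere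
    (Φ.ap f = (0 : H →ₗ[𝕜] H).toPMap ⊤ ↔ Φ.IsNull {x | f x ≠ 0}) ∧
    -- (c) Φ(f) = Φ(g) iff f = g Φ-almost everywhere
    (Φ.ap f = Φ.ap g ↔ Φ.IsNull {x | f x ≠ g x}) ∧
    -- (d) Φ(f) is injective iff f ≠ 0 Φ-almost everywhere
    ((Function.Injective fun x : (Φ.ap f).domain => Φ.ap f x) ↔ Φ.IsNull {x | f x = 0}) :=
  ⟨Φ.kerSet_eq f hf, Φ.ap_eq_zero_iff f hf, Φ.ap_eq_iff f g hf hg, Φ.injective_iff f hf⟩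

end
end
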